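/- arXiv:1903.02675 — 7 statements merged into one kernel-verified Lean document; each statement's English description precedes it below -/
import Mathlib

section
/- Let Y be a real symmetric n×n matrix with eigenvalues λ_1, …, λ_n, and let u be uniformly distributed on the unit sphere S^{n-1} ⊂ ℝⁿ. Then p̄(Y) := E_u[log(uᵀ e^{Y} u)] = E_u[log(Σ_{i=1}^n u_i² e^{λ_i})], and moreover the function Y ↦ p̄(Y), defined on the real vector space of symmetric n×n matrices, is convex. -/
open MeasureTheory Matrix

noncomputable section

open scoped Classical in
/-- Eigenvalues of a real symmetric (Hermitian) matrix; junk value `0` otherwise. -/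
noncomputable def eigs {n : ℕ} (Y : Matrix (Fin n) (Fin n) ℝ) : Fin n → ℝ :=
  if h : Y.IsHermitian then h.eigenvalues else 0

/-- Largest eigenvalue of a real symmetric matrix. -/
noncomputable def lambdaMax {n : ℕ} (Y : Matrix (Fin n) (Fin n) ℝ) : ℝ :=
  ⨆ i, eigs Y i

/-- Operator norm of a real symmetric matrix: largest absolute value of an eigenvalue. -/
noncomputable def opNorm {n : ℕ} (Y : Matrix (Fin n) (Fin n) ℝ) : ℝ :=
  ⨆ i, |eigs Y i|

/-- Frobenius inner product `⟨A, B⟩ = tr (Aᵀ B)`. -/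
noncomputable def minner {n : ℕ} (A B : Matrix (Fin n) (Fin n) ℝ) : ℝ :=
  (Aᵀ * B).trace

/-- Matrix exponential. -/
noncomputable def mexp {n : ℕ} (Y : Matrix (Fin n) (Fin n) ℝ) : Matrix (Fin n) (Fin n) ℝ :=
  NormedSpace.exp Y

/-- The uniform (normalized surface) probability measure on the unit sphere in `ℝⁿ`. -/
noncomputable def sphereUniform (n : ℕ) :
    Measure (Metric.sphere (0 : EuclideanSpace ℝ (Fin n)) 1) :=
  ((volume : Measure (EuclideanSpace ℝ (Fin n))).toSphere Set.univ)⁻¹ •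
    (volume : Measure (EuclideanSpace ℝ (Fin n))).toSphere

/-- The randomized mirror projection `P_u(Y) = e^{Y/2} u uᵀ e^{Y/2} / (uᵀ e^Y u)`. -/
noncomputable def Pu {n : ℕ} (u : Fin n → ℝ) (Y : Matrix (Fin n) (Fin n) ℝ) :
    Matrix (Fin n) (Fin n) ℝ :=
  (u ⬝ᵥ (mexp Y *ᵥ u))⁻¹ •
    (mexp ((2 : ℝ)⁻¹ • Y) * Matrix.vecMulVec u u * mexp ((2 : ℝ)⁻¹ • Y))

/-- The average mirror projection `P̄(Y) = E_u P_u(Y)`, `u` uniform on the unit sphere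
(defined entrywise via the Bochner integral). -/
noncomputable def Pbar {n : ℕ} (Y : Matrix (Fin n) (Fin n) ℝ) : Matrix (Fin n) (Fin n) ℝ :=
  Matrix.of fun i j =>
    ∫ u, Pu (fun k => (u : EuclideanSpace ℝ (Fin n)) k) Y i j ∂(sphereUniform n)

/-- `p̄(Y) = E_u log (uᵀ e^Y u)`, `u` uniform on the unit sphere. -/
noncomputable def pbar {n : ℕ} (Y : Matrix (Fin n) (Fin n) ℝ) : ℝ :=
  ∫ u, Real.log ((fun k => (u : EuclideanSpace ℝ (Fin n)) k) ⬝ᵥ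
      (mexp Y *ᵥ fun k => (u : EuclideanSpace ℝ (Fin n)) k)) ∂(sphereUniform n)

/-- Bregman divergence induced by `p̄`. -/
noncomputable def Vbar {n : ℕ} (Y Y' : Matrix (Fin n) (Fin n) ℝ) : ℝ :=
  pbar Y' - pbar Y - minner (Y' - Y) (Pbar Y)

/-- Matrix multiplicative weights projection `P^mw(Y) = e^Y / tr e^Y`. -/
noncomputable def Pmw {n : ℕ} (Y : Matrix (Fin n) (Fin n) ℝ) : Matrix (Fin n) (Fin n) ℝ :=
  ((mexp Y).trace)⁻¹ • mexp Y

/-- Euclidean norm on `ℝⁿ`. -/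
noncomputable def enorm2 {n : ℕ} (v : Fin n → ℝ) : ℝ :=
  Real.sqrt (∑ i, v i ^ 2)

/-- Trace (nuclear) norm of a real symmetric matrix: sum of absolute values of eigenvalues. -/
noncomputable def traceNorm {n : ℕ} (M : Matrix (Fin n) (Fin n) ℝ) : ℝ :=
  ∑ i, |eigs M i|


/-! ### Auxiliary machinery for `stmt8` -/

open scoped Pointwise

namespace Stmt8Aux

/-- Sphere homeomorphism induced by a linear isometry equivalence. -/
def sphereMap {n : ℕ} (e : EuclideanSpace ℝ (Fin n) ≃ₗᵢ[ℝ] EuclideanSpace ℝ (Fin n)) :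
    Metric.sphere (0 : EuclideanSpace ℝ (Fin n)) 1 ≃ₜ
      Metric.sphere (0 : EuclideanSpace ℝ (Fin n)) 1 where
  toFun x := ⟨e x, by
    rw [mem_sphere_zero_iff_norm, e.norm_map, ← mem_sphere_zero_iff_norm]; exact x.2⟩
  invFun x := ⟨e.symm x, by
    rw [mem_sphere_zero_iff_norm, e.symm.norm_map, ← mem_sphere_zero_iff_norm]; exact x.2⟩
  left_inv x := Subtype.ext (e.symm_apply_apply x)
  right_inv x := Subtype.ext (e.apply_symm_apply x)
  continuous_toFun := by
    exact ((e.continuous).comp continuous_subtype_val).subtype_mk _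
  continuous_invFun := by
    exact ((e.symm.continuous).comp continuous_subtype_val).subtype_mk _

lemma sphereMap_coe {n : ℕ} (e : EuclideanSpace ℝ (Fin n) ≃ₗᵢ[ℝ] EuclideanSpace ℝ (Fin n))
    (x : Metric.sphere (0 : EuclideanSpace ℝ (Fin n)) 1) :
    ((sphereMap e x : Metric.sphere (0 : EuclideanSpace ℝ (Fin n)) 1) :
      EuclideanSpace ℝ (Fin n)) = e x := rfl

lemma smul_Ioo_sphere {n : ℕ} (T : Set (EuclideanSpace ℝ (Fin n)))
    (hT : T ⊆ Metric.sphere (0 : EuclideanSpace ℝ (Fin n)) 1) :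
    Set.Ioo (0:ℝ) 1 • T = {x | ‖x‖ ∈ Set.Ioo (0:ℝ) 1 ∧ ‖x‖⁻¹ • x ∈ T} := by
  ext x
  rw [Set.mem_smul]
  constructor
  · rintro ⟨r, hr, y, hy, rfl⟩
    have hy1 : ‖y‖ = 1 := mem_sphere_zero_iff_norm.mp (hT hy)
    have hr0 : (0:ℝ) < r := hr.1
    have hnorm : ‖r • y‖ = r := by
      rw [norm_smul, hy1, mul_one, Real.norm_eq_abs, abs_of_pos hr0]
    refine ⟨by rw [hnorm]; exact hr, ?_⟩
    rw [hnorm, smul_smul, inv_mul_cancel₀ hr0.ne', one_smul]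
    exact hy
  · rintro ⟨h1, h2⟩
    exact ⟨‖x‖, h1, ‖x‖⁻¹ • x, h2, smul_inv_smul₀ h1.1.ne' x⟩

lemma measurableSet_smul_Ioo {n : ℕ} {T : Set (EuclideanSpace ℝ (Fin n))}
    (hT : T ⊆ Metric.sphere (0 : EuclideanSpace ℝ (Fin n)) 1) (hTm : MeasurableSet T) :
    MeasurableSet (Set.Ioo (0:ℝ) 1 • T) := by
  rw [smul_Ioo_sphere T hT]
  have h1 : Measurable fun x : EuclideanSpace ℝ (Fin n) => ‖x‖ := measurable_norm
  have h2 : Measurable fun x : EuclideanSpace ℝ (Fin n) => ‖x‖⁻¹ • x :=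
    (h1.inv).smul measurable_id
  exact (h1 measurableSet_Ioo).inter (h2 hTm)

lemma map_toSphere {n : ℕ} (e : EuclideanSpace ℝ (Fin n) ≃ₗᵢ[ℝ] EuclideanSpace ℝ (Fin n)) :
    Measure.map (sphereMap e) (volume : Measure (EuclideanSpace ℝ (Fin n))).toSphere
      = (volume : Measure (EuclideanSpace ℝ (Fin n))).toSphere := by
  refine Measure.ext fun s hs => ?_
  have hm : Measurable (sphereMap e) := (sphereMap e).continuous.measurable
  have hsub : Subtype.val '' s ⊆ Metric.sphere (0 : EuclideanSpace ℝ (Fin n)) 1 := by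
    rintro x ⟨z, _, rfl⟩; exact z.2
  have hTm : MeasurableSet (Subtype.val '' s) :=
    (MeasurableEmbedding.subtype_coe (Metric.isClosed_sphere).measurableSet).measurableSet_image' hs
  have himg : Subtype.val '' (sphereMap e ⁻¹' s) = ⇑e ⁻¹' (Subtype.val '' s) := by
    ext x
    simp only [Set.mem_image, Set.mem_preimage]
    constructor
    · rintro ⟨z, hz, rfl⟩
      exact ⟨sphereMap e z, hz, rfl⟩
    · rintro ⟨w, hw, hwe⟩
      have hx : x ∈ Metric.sphere (0 : EuclideanSpace ℝ (Fin n)) 1 := by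
        rw [mem_sphere_zero_iff_norm, ← e.norm_map x, ← hwe,
          ← mem_sphere_zero_iff_norm]
        exact w.2
      refine ⟨⟨x, hx⟩, ?_, rfl⟩
      have : sphereMap e ⟨x, hx⟩ = w := Subtype.ext hwe.symm
      rw [this]; exact hw
  have hsub2 : ⇑e ⁻¹' (Subtype.val '' s) ⊆ Metric.sphere (0 : EuclideanSpace ℝ (Fin n)) 1 := by
    intro x hx
    have := hsub hx
    rw [mem_sphere_zero_iff_norm] at this ⊢
    rw [← e.norm_map x]; exact this
  have hpre : Set.Ioo (0:ℝ) 1 • (⇑e ⁻¹' (Subtype.val '' s))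
      = ⇑e ⁻¹' (Set.Ioo (0:ℝ) 1 • (Subtype.val '' s)) := by
    rw [smul_Ioo_sphere _ hsub2, smul_Ioo_sphere _ hsub]
    ext x
    simp only [Set.mem_preimage, Set.mem_setOf_eq, e.norm_map, e.map_smul]
  rw [Measure.map_apply hm hs, Measure.toSphere_apply' _ (hm hs), Measure.toSphere_apply' _ hs]
  rw [himg, hpre]
  congr 1
  exact (e.measurePreserving).measure_preimage
    (measurableSet_smul_Ioo hsub hTm).nullMeasurableSet

lemma measurePreserving_sphereMap {n : ℕ}
    (e : EuclideanSpace ℝ (Fin n) ≃ₗᵢ[ℝ] EuclideanSpace ℝ (Fin n)) :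
    MeasurePreserving (sphereMap e) (sphereUniform n) (sphereUniform n) :=
  ⟨(sphereMap e).continuous.measurable, by
    rw [sphereUniform, Measure.map_smul, map_toSphere]⟩

instance sphereUniform_finite (n : ℕ) : IsFiniteMeasure (sphereUniform n) := by
  constructor
  rw [sphereUniform, Measure.smul_apply, smul_eq_mul]
  rcases eq_or_ne ((volume : Measure (EuclideanSpace ℝ (Fin n))).toSphere Set.univ) 0 with h | h
  · rw [h]; simp
  · rw [ENNReal.inv_mul_cancel h (measure_ne_top _ _)]
    exact ENNReal.one_lt_top

/-! #### Matrix exponential acting on eigenvectors -/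

lemma mexp_mulVec_eig {n : ℕ} {Y : Matrix (Fin n) (Fin n) ℝ} {lam : ℝ} {v : Fin n → ℝ}
    (hv : Y *ᵥ v = lam • v) : mexp Y *ᵥ v = Real.exp lam • v := by
  letI : SeminormedRing (Matrix (Fin n) (Fin n) ℝ) := Matrix.linftyOpSemiNormedRing
  letI : NormedRing (Matrix (Fin n) (Fin n) ℝ) := Matrix.linftyOpNormedRing
  letI : NormedAlgebra ℝ (Matrix (Fin n) (Fin n) ℝ) := Matrix.linftyOpNormedAlgebra
  have hpow : ∀ k : ℕ, Y ^ k *ᵥ v = lam ^ k • v := by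
    intro k; induction k with
    | zero => simp
    | succ k ih =>
        rw [pow_succ, ← Matrix.mulVec_mulVec, hv, Matrix.mulVec_smul, ih, smul_smul, pow_succ,
          mul_comm]
  let L : Matrix (Fin n) (Fin n) ℝ →ₗ[ℝ] (Fin n → ℝ) :=
    { toFun := fun M => M *ᵥ v
      map_add' := fun M N => Matrix.add_mulVec M N v
      map_smul' := fun c M => Matrix.smul_mulVec c M v }
  have hLc : Continuous L := LinearMap.continuous_of_finiteDimensional L
  have h1 : HasSum (fun k : ℕ => ((k.factorial : ℝ))⁻¹ • Y ^ k) (NormedSpace.exp Y) :=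
    NormedSpace.exp_series_hasSum_exp' Y
  have h2 : HasSum (fun k : ℕ => ((k.factorial : ℝ))⁻¹ • (lam ^ k • v)) (mexp Y *ᵥ v) := by
    have := h1.map L.toAddMonoidHom hLc
    have heq : (⇑L.toAddMonoidHom ∘ fun k : ℕ => ((k.factorial : ℝ))⁻¹ • Y ^ k)
        = fun k : ℕ => ((k.factorial : ℝ))⁻¹ • (lam ^ k • v) := by
      funext k
      show (((k.factorial : ℝ))⁻¹ • Y ^ k) *ᵥ v = _
      rw [Matrix.smul_mulVec, hpow k]
    rw [heq] at this
    exact this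
  let M : ℝ →ₗ[ℝ] (Fin n → ℝ) :=
    { toFun := fun c => c • v
      map_add' := fun a b => add_smul a b v
      map_smul' := fun a b => by simp [smul_smul] }
  have hMc : Continuous M := LinearMap.continuous_of_finiteDimensional M
  have h3 : HasSum (fun k : ℕ => ((k.factorial : ℝ))⁻¹ • lam ^ k) (Real.exp lam) := by
    rw [Real.exp_eq_exp_ℝ]
    exact NormedSpace.exp_series_hasSum_exp' lam
  have h4 : HasSum (fun k : ℕ => ((k.factorial : ℝ))⁻¹ • (lam ^ k • v)) (Real.exp lam • v) := by
    have := h3.map M.toAddMonoidHom hMc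
    have heq : (⇑M.toAddMonoidHom ∘ fun k : ℕ => ((k.factorial : ℝ))⁻¹ • lam ^ k)
        = fun k : ℕ => ((k.factorial : ℝ))⁻¹ • (lam ^ k • v) := by
      funext k
      show (((k.factorial : ℝ))⁻¹ • lam ^ k) • v = _
      rw [smul_eq_mul, mul_smul]
    rw [heq] at this
    exact this
  exact h2.unique h4

lemma dp_inner {n : ℕ} (x y : EuclideanSpace ℝ (Fin n)) :
    (fun k => x k) ⬝ᵥ (fun k => y k) = (inner ℝ x y : ℝ) := by
  simp [dotProduct, mul_comm, PiLp.inner_apply, RCLike.inner_apply]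

lemma transpose_of_herm {n : ℕ} {Y : Matrix (Fin n) (Fin n) ℝ} (hH : Y.IsHermitian) : Yᵀ = Y := by
  rw [← Matrix.conjTranspose_eq_transpose_of_trivial]; exact hH

lemma isHerm_of_isSymm {n : ℕ} {Y : Matrix (Fin n) (Fin n) ℝ} (h : Y.IsSymm) : Y.IsHermitian := by
  show Yᴴ = Y
  rw [Matrix.conjTranspose_eq_transpose_of_trivial]; exact h

lemma mexp_symm {n : ℕ} {Y : Matrix (Fin n) (Fin n) ℝ} (hH : Y.IsHermitian) :
    (mexp Y)ᵀ = mexp Y := by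
  rw [mexp, ← Matrix.exp_transpose, transpose_of_herm hH]

lemma eigenBasis_mulVec {n : ℕ} {Y : Matrix (Fin n) (Fin n) ℝ} (hH : Y.IsHermitian) (j : Fin n) :
    Y *ᵥ (fun k => hH.eigenvectorBasis j k)
      = hH.eigenvalues j • (fun k => hH.eigenvectorBasis j k) :=
  hH.mulVec_eigenvectorBasis j

lemma mexp_eigenBasis_mulVec {n : ℕ} {Y : Matrix (Fin n) (Fin n) ℝ} (hH : Y.IsHermitian)
    (j : Fin n) :
    mexp Y *ᵥ (fun k => hH.eigenvectorBasis j k)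
      = Real.exp (hH.eigenvalues j) • (fun k => hH.eigenvectorBasis j k) :=
  mexp_mulVec_eig (eigenBasis_mulVec hH j)

lemma dot_mexp {n : ℕ} {Y : Matrix (Fin n) (Fin n) ℝ} (hH : Y.IsHermitian)
    (u : EuclideanSpace ℝ (Fin n)) :
    (fun k => (hH.eigenvectorBasis.repr.symm u) k) ⬝ᵥ
      (mexp Y *ᵥ fun k => (hH.eigenvectorBasis.repr.symm u) k)
      = ∑ i, (u i)^2 * Real.exp (hH.eigenvalues i) := by
  set b := hH.eigenvectorBasis with hb
  set v : EuclideanSpace ℝ (Fin n) := b.repr.symm u with hv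
  set w : EuclideanSpace ℝ (Fin n) := WithLp.toLp 2 (mexp Y *ᵥ (fun k => v k)) with hw
  have hrv : b.repr v = u := b.repr.apply_symm_apply u
  have hrw : ∀ i, b.repr w i = Real.exp (hH.eigenvalues i) * u i := by
    intro i
    rw [b.repr_apply_apply]
    rw [← dp_inner (b i) w]
    show (fun k => b i k) ⬝ᵥ (mexp Y *ᵥ fun k => v k) = _
    rw [Matrix.dotProduct_mulVec, ← Matrix.mulVec_transpose, mexp_symm hH,
      mexp_eigenBasis_mulVec hH i, smul_dotProduct, dp_inner (b i) v,
      ← b.repr_apply_apply, hrv]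
    rfl
  have h2 : (inner ℝ v w : ℝ) = ∑ i, (b.repr v i) * (b.repr w i) := by
    rw [← b.repr.inner_map_map v w, PiLp.inner_apply]
    simp [mul_comm]
  calc (fun k => v k) ⬝ᵥ (mexp Y *ᵥ fun k => v k) = (inner ℝ v w : ℝ) := dp_inner v w
    _ = ∑ i, (b.repr v i) * (b.repr w i) := h2
    _ = ∑ i, (u i)^2 * Real.exp (hH.eigenvalues i) := by
        refine Finset.sum_congr rfl fun i _ => ?_
        rw [hrv, hrw i]; ring

/-! #### The spectral functional `J` -/

/-- `J(x) = E_u log (∑ i, u i ^ 2 * exp (x i))`. -/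
noncomputable def Jfun (n : ℕ) (x : Fin n → ℝ) : ℝ :=
  ∫ u, Real.log (∑ i, ((u : EuclideanSpace ℝ (Fin n)) i) ^ 2 *
      Real.exp (x i)) ∂(sphereUniform n)

lemma exists_coord_ne_zero {n : ℕ} (u : Metric.sphere (0 : EuclideanSpace ℝ (Fin n)) 1) :
    ∃ i, (u : EuclideanSpace ℝ (Fin n)) i ≠ 0 := by
  by_contra h
  push_neg at h
  have hn : ‖(u : EuclideanSpace ℝ (Fin n))‖ = 1 := mem_sphere_zero_iff_norm.mp u.2
  rw [EuclideanSpace.norm_eq] at hn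
  have : ∑ i, ‖(u : EuclideanSpace ℝ (Fin n)) i‖ ^ 2 = 0 :=
    Finset.sum_eq_zero fun i _ => by rw [h i]; simp
  rw [this, Real.sqrt_zero] at hn
  exact zero_ne_one hn

lemma sum_sq_exp_pos {n : ℕ} (x : Fin n → ℝ)
    (u : Metric.sphere (0 : EuclideanSpace ℝ (Fin n)) 1) :
    0 < ∑ i, ((u : EuclideanSpace ℝ (Fin n)) i) ^ 2 * Real.exp (x i) := by
  obtain ⟨i, hi⟩ := exists_coord_ne_zero u
  exact Finset.sum_pos' (fun j _ => by positivity) ⟨i, Finset.mem_univ i, by positivity⟩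

lemma cont_integrand {n : ℕ} (x : Fin n → ℝ) :
    Continuous fun u : Metric.sphere (0 : EuclideanSpace ℝ (Fin n)) 1 =>
      Real.log (∑ i, ((u : EuclideanSpace ℝ (Fin n)) i) ^ 2 * Real.exp (x i)) := by
  have hg : Continuous fun u : Metric.sphere (0 : EuclideanSpace ℝ (Fin n)) 1 =>
      ∑ i, ((u : EuclideanSpace ℝ (Fin n)) i) ^ 2 * Real.exp (x i) := by
    refine continuous_finset_sum _ fun i _ => Continuous.mul ?_ continuous_const
    exact ((EuclideanSpace.proj (𝕜 := ℝ) i).continuous.comp continuous_subtype_val).pow 2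
  exact hg.log fun u => (sum_sq_exp_pos x u).ne'

lemma integrable_of_cont {X : Type*} [TopologicalSpace X] [CompactSpace X] [MeasurableSpace X]
    [OpensMeasurableSpace X] (μ : Measure X) [IsFiniteMeasure μ] (f : X → ℝ)
    (hf : Continuous f) : Integrable f μ := by
  obtain ⟨C, hC⟩ := (isCompact_range (continuous_norm.comp hf)).bddAbove
  exact Integrable.mono' (integrable_const C) hf.aestronglyMeasurable
    (ae_of_all _ fun u => hC (Set.mem_range_self u))

lemma integrable_integrand {n : ℕ} (x : Fin n → ℝ) :
    Integrable (fun u : Metric.sphere (0 : EuclideanSpace ℝ (Fin n)) 1 =>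
      Real.log (∑ i, ((u : EuclideanSpace ℝ (Fin n)) i) ^ 2 * Real.exp (x i)))
      (sphereUniform n) :=
  integrable_of_cont _ _ (cont_integrand x)

lemma rpow_split {a : ℝ} (ha : 0 ≤ a) {s t : ℝ} (hs : 0 < s) (ht : 0 < t) (hst : s + t = 1) :
    a = a ^ s * a ^ t := by
  rcases eq_or_lt_of_le ha with h | h
  · rw [← h, Real.zero_rpow hs.ne', zero_mul]
  · rw [← Real.rpow_add h, hst, Real.rpow_one]

lemma sum_holder {m : Type*} [Fintype m] (a b : m → ℝ) (ha : ∀ i, 0 ≤ a i) (hb : ∀ i, 0 ≤ b i)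
    {s t : ℝ} (hs : 0 < s) (ht : 0 < t) (hst : s + t = 1) :
    ∑ i, (a i) ^ s * (b i) ^ t ≤ (∑ i, a i) ^ s * (∑ i, b i) ^ t := by
  have hs1 : s < 1 := by linarith
  have hpq : (1/s).HolderConjugate (1/t) := by
    rw [Real.holderConjugate_iff]
    constructor
    · rw [lt_div_iff₀ hs, one_mul]; exact hs1
    · rw [one_div, one_div, inv_inv, inv_inv]; exact hst
  have h := Real.inner_le_Lp_mul_Lq Finset.univ (fun i => (a i) ^ s) (fun i => (b i) ^ t) hpq
  have e1 : ∀ i, |(a i) ^ s| ^ (1/s) = a i := fun i => by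
    rw [abs_of_nonneg (Real.rpow_nonneg (ha i) s), ← Real.rpow_mul (ha i),
      mul_one_div_cancel hs.ne', Real.rpow_one]
  have e2 : ∀ i, |(b i) ^ t| ^ (1/t) = b i := fun i => by
    rw [abs_of_nonneg (Real.rpow_nonneg (hb i) t), ← Real.rpow_mul (hb i),
      mul_one_div_cancel ht.ne', Real.rpow_one]
  simp only [e1, e2, one_div_one_div] at h
  exact h

lemma log_combo_le {n : ℕ} (x y : Fin n → ℝ) {s t : ℝ} (hs : 0 < s) (ht : 0 < t) (hst : s + t = 1)
    (u : Metric.sphere (0 : EuclideanSpace ℝ (Fin n)) 1) :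
    Real.log (∑ i, ((u : EuclideanSpace ℝ (Fin n)) i) ^ 2 * Real.exp ((s • x + t • y) i))
      ≤ s * Real.log (∑ i, ((u : EuclideanSpace ℝ (Fin n)) i) ^ 2 * Real.exp (x i))
        + t * Real.log (∑ i, ((u : EuclideanSpace ℝ (Fin n)) i) ^ 2 * Real.exp (y i)) := by
  set X := ∑ i, ((u : EuclideanSpace ℝ (Fin n)) i) ^ 2 * Real.exp (x i) with hX
  set Y := ∑ i, ((u : EuclideanSpace ℝ (Fin n)) i) ^ 2 * Real.exp (y i) with hY
  have hXpos : 0 < X := sum_sq_exp_pos x u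
  have hYpos : 0 < Y := sum_sq_exp_pos y u
  have key : ∑ i, ((u : EuclideanSpace ℝ (Fin n)) i) ^ 2 * Real.exp ((s • x + t • y) i)
      ≤ X ^ s * Y ^ t := by
    have hterm : ∀ i, ((u : EuclideanSpace ℝ (Fin n)) i) ^ 2 * Real.exp ((s • x + t • y) i)
        = (((u : EuclideanSpace ℝ (Fin n)) i) ^ 2 * Real.exp (x i)) ^ s *
          (((u : EuclideanSpace ℝ (Fin n)) i) ^ 2 * Real.exp (y i)) ^ t := by
      intro i
      have hcoord : ((s • x + t • y) i) = s * x i + t * y i := by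
        simp [Pi.add_apply, Pi.smul_apply, smul_eq_mul]
      rw [hcoord, Real.mul_rpow (by positivity) (Real.exp_nonneg _),
        Real.mul_rpow (by positivity) (Real.exp_nonneg _)]
      have hexp : Real.exp (s * x i + t * y i) = Real.exp (x i) ^ s * Real.exp (y i) ^ t := by
        rw [Real.exp_add, mul_comm s (x i), mul_comm t (y i), Real.exp_mul, Real.exp_mul]
      rw [hexp]
      nth_rewrite 1 [rpow_split (a := ((u : EuclideanSpace ℝ (Fin n)) i) ^ 2)
        (by positivity) hs ht hst]
      ring
    calc ∑ i, ((u : EuclideanSpace ℝ (Fin n)) i) ^ 2 * Real.exp ((s • x + t • y) i)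
        = ∑ i, (((u : EuclideanSpace ℝ (Fin n)) i) ^ 2 * Real.exp (x i)) ^ s *
            (((u : EuclideanSpace ℝ (Fin n)) i) ^ 2 * Real.exp (y i)) ^ t :=
          Finset.sum_congr rfl fun i _ => hterm i
      _ ≤ X ^ s * Y ^ t :=
          sum_holder _ _ (fun i => by positivity) (fun i => by positivity) hs ht hst
  have hLpos : 0 < ∑ i, ((u : EuclideanSpace ℝ (Fin n)) i) ^ 2 * Real.exp ((s • x + t • y) i) :=
    sum_sq_exp_pos _ u
  calc Real.log (∑ i, ((u : EuclideanSpace ℝ (Fin n)) i) ^ 2 * Real.exp ((s • x + t • y) i))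
      ≤ Real.log (X ^ s * Y ^ t) := Real.log_le_log hLpos key
    _ = s * Real.log X + t * Real.log Y := by
        rw [Real.log_mul (by positivity) (by positivity), Real.log_rpow hXpos,
          Real.log_rpow hYpos]

lemma convexOn_Jfun (n : ℕ) : ConvexOn ℝ Set.univ (Jfun n) := by
  refine ⟨convex_univ, ?_⟩
  intro x _ y _ s t hs ht hst
  rcases eq_or_lt_of_le hs with rfl | hs'
  · have ht1 : t = 1 := by linarith
    subst ht1; simp
  rcases eq_or_lt_of_le ht with rfl | ht'
  · have hs1 : s = 1 := by linarith
    subst hs1; simp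
  have key := fun u => log_combo_le x y hs' ht' hst u
  have h1 : Jfun n (s • x + t • y) ≤ ∫ u,
      (s * Real.log (∑ i, ((u : EuclideanSpace ℝ (Fin n)) i) ^ 2 * Real.exp (x i))
        + t * Real.log (∑ i, ((u : EuclideanSpace ℝ (Fin n)) i) ^ 2 * Real.exp (y i)))
      ∂(sphereUniform n) := by
    refine integral_mono (integrable_integrand _) ?_ key
    exact ((integrable_integrand x).const_mul s).add ((integrable_integrand y).const_mul t)
  rw [Jfun] at h1 ⊢
  refine h1.trans_eq ?_
  rw [integral_add ((integrable_integrand x).const_mul s) ((integrable_integrand y).const_mul t)]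
  have hsx : ∫ u, s * Real.log (∑ i, ((u : EuclideanSpace ℝ (Fin n)) i) ^ 2 * Real.exp (x i))
      ∂(sphereUniform n) = s * Jfun n x := by
    simpa [smul_eq_mul, Jfun] using integral_smul (μ := sphereUniform n) s
      (fun u : Metric.sphere (0 : EuclideanSpace ℝ (Fin n)) 1 =>
        Real.log (∑ i, ((u : EuclideanSpace ℝ (Fin n)) i) ^ 2 * Real.exp (x i)))
  have hty : ∫ u, t * Real.log (∑ i, ((u : EuclideanSpace ℝ (Fin n)) i) ^ 2 * Real.exp (y i))
      ∂(sphereUniform n) = t * Jfun n y := by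
    simpa [smul_eq_mul, Jfun] using integral_smul (μ := sphereUniform n) t
      (fun u : Metric.sphere (0 : EuclideanSpace ℝ (Fin n)) 1 =>
        Real.log (∑ i, ((u : EuclideanSpace ℝ (Fin n)) i) ^ 2 * Real.exp (y i)))
  rw [hsx, hty, Jfun, smul_eq_mul, smul_eq_mul]

set_option maxHeartbeats 1000000 in
lemma Jfun_perm {n : ℕ} (x : Fin n → ℝ) (σ : Equiv.Perm (Fin n)) :
    Jfun n (fun i => x (σ i)) = Jfun n x := by
  let e : EuclideanSpace ℝ (Fin n) ≃ₗᵢ[ℝ] EuclideanSpace ℝ (Fin n) :=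
    LinearIsometryEquiv.piLpCongrLeft 2 ℝ ℝ σ
  have h := (measurePreserving_sphereMap e).integral_comp (sphereMap e).measurableEmbedding
      (fun v : Metric.sphere (0 : EuclideanSpace ℝ (Fin n)) 1 =>
        Real.log (∑ i, ((v : EuclideanSpace ℝ (Fin n)) i) ^ 2 * Real.exp (x i)))
  rw [Jfun, Jfun, ← h]
  refine integral_congr_ae (Filter.Eventually.of_forall fun u => ?_)
  have he : ∀ i, ((sphereMap e u : Metric.sphere (0 : EuclideanSpace ℝ (Fin n)) 1) :
      EuclideanSpace ℝ (Fin n)) i = (u : EuclideanSpace ℝ (Fin n)) (σ.symm i) := by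
    intro i
    rw [sphereMap_coe]
    simp [e, LinearIsometryEquiv.piLpCongrLeft_apply, Equiv.piCongrLeft'_apply]
  have hsum : ∑ i, ((u : EuclideanSpace ℝ (Fin n)) i) ^ 2 * Real.exp (x (σ i))
      = ∑ i, (((sphereMap e u : Metric.sphere (0 : EuclideanSpace ℝ (Fin n)) 1) :
        EuclideanSpace ℝ (Fin n)) i) ^ 2 * Real.exp (x i) := by
    refine (Fintype.sum_equiv σ _ (fun i => ((u : EuclideanSpace ℝ (Fin n)) (σ.symm i)) ^ 2
      * Real.exp (x i)) fun i => by dsimp only; rw [Equiv.symm_apply_apply σ i]).trans ?_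
    exact Finset.sum_congr rfl fun i _ => by rw [he i]
  exact congrArg Real.log hsum

/-! #### The spectral representation of `pbar` -/

lemma pbar_eq_J {n : ℕ} (Y : Matrix (Fin n) (Fin n) ℝ) (hH : Y.IsHermitian) :
    pbar Y = Jfun n hH.eigenvalues := by
  let e : EuclideanSpace ℝ (Fin n) ≃ₗᵢ[ℝ] EuclideanSpace ℝ (Fin n) :=
    hH.eigenvectorBasis.repr.symm
  have h := (measurePreserving_sphereMap e).integral_comp (sphereMap e).measurableEmbedding
      (fun v : Metric.sphere (0 : EuclideanSpace ℝ (Fin n)) 1 =>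
        Real.log ((fun k => (v : EuclideanSpace ℝ (Fin n)) k) ⬝ᵥ
          (mexp Y *ᵥ fun k => (v : EuclideanSpace ℝ (Fin n)) k)))
  rw [pbar, ← h, Jfun]
  refine integral_congr_ae (Filter.Eventually.of_forall fun u => ?_)
  exact congrArg Real.log (dot_mexp hH (u : EuclideanSpace ℝ (Fin n)))

/-! #### Schur-convexity step via Birkhoff -/

lemma sum_sq_repr {n : ℕ} (b : OrthonormalBasis (Fin n) ℝ (EuclideanSpace ℝ (Fin n)))
    (v : EuclideanSpace ℝ (Fin n)) : ∑ j, (b.repr v j)^2 = ‖v‖^2 := by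
  have h : ‖b.repr v‖ = ‖v‖ := b.repr.norm_map v
  rw [← h, EuclideanSpace.norm_eq, Real.sq_sqrt (by positivity)]
  exact Finset.sum_congr rfl fun j _ => by rw [Real.norm_eq_abs, sq_abs]

lemma dot_basis_eq_S {n : ℕ} {A : Matrix (Fin n) (Fin n) ℝ} (hA : A.IsHermitian)
    (w : OrthonormalBasis (Fin n) ℝ (EuclideanSpace ℝ (Fin n))) (i : Fin n) :
    (fun k => w i k) ⬝ᵥ (A *ᵥ fun k => w i k)
      = ∑ j, (hA.eigenvectorBasis.repr (w i) j)^2 * hA.eigenvalues j := by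
  set q := hA.eigenvectorBasis with hq
  set v : EuclideanSpace ℝ (Fin n) := w i with hv
  set z : EuclideanSpace ℝ (Fin n) := WithLp.toLp 2 (A *ᵥ (fun k => v k)) with hz0
  have hz : ∀ j, q.repr z j = hA.eigenvalues j * q.repr v j := by
    intro j
    rw [q.repr_apply_apply, ← dp_inner (q j) z]
    show (fun k => q j k) ⬝ᵥ (A *ᵥ fun k => v k) = _
    rw [Matrix.dotProduct_mulVec, ← Matrix.mulVec_transpose, transpose_of_herm hA,
      eigenBasis_mulVec hA j, smul_dotProduct, dp_inner (q j) v, ← q.repr_apply_apply]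
    rfl
  calc (fun k => v k) ⬝ᵥ (A *ᵥ fun k => v k) = (inner ℝ v z : ℝ) := dp_inner v z
    _ = ∑ j, (q.repr v j) * (q.repr z j) := by
        rw [← q.repr.inner_map_map v z, PiLp.inner_apply]
        simp [mul_comm]
    _ = ∑ j, (q.repr v j)^2 * hA.eigenvalues j := by
        refine Finset.sum_congr rfl fun j _ => ?_
        rw [hz j]; ring

lemma permMatrix_mulVec_sum {n : ℕ} (σ : Equiv.Perm (Fin n)) (lam : Fin n → ℝ) (i : Fin n) :
    ∑ j, (σ.permMatrix ℝ) i j * lam j = lam (σ i) := by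
  classical
  have : ∀ j, (σ.permMatrix ℝ) i j * lam j = if σ i = j then lam j else 0 := by
    intro j
    simp [Equiv.Perm.permMatrix, PEquiv.toMatrix_apply, Equiv.toPEquiv_apply, Option.mem_def,
      ite_mul, eq_comm]
  rw [Finset.sum_congr rfl fun j _ => this j, Finset.sum_ite_eq]
  simp

lemma Jfun_frame_le {n : ℕ} {A : Matrix (Fin n) (Fin n) ℝ} (hA : A.IsHermitian)
    (w : OrthonormalBasis (Fin n) ℝ (EuclideanSpace ℝ (Fin n))) :
    Jfun n (fun i => (fun k => w i k) ⬝ᵥ (A *ᵥ fun k => w i k)) ≤ Jfun n hA.eigenvalues := by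
  classical
  set q := hA.eigenvectorBasis with hq
  set lam := hA.eigenvalues with hlam
  set S : Matrix (Fin n) (Fin n) ℝ := Matrix.of (fun i j => (q.repr (w i) j)^2) with hS
  have hSentry : ∀ i j, S i j = (q.repr (w i) j)^2 := fun i j => rfl
  have hSmem : S ∈ doublyStochastic ℝ (Fin n) := by
    rw [mem_doublyStochastic_iff_sum]
    refine ⟨fun i j => by rw [hSentry]; positivity, fun i => ?_, fun j => ?_⟩
    · rw [Finset.sum_congr rfl fun j _ => hSentry i j, sum_sq_repr q (w i),
        w.orthonormal.1 i]
      norm_num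
    · have hswap : ∀ i, q.repr (w i) j = w.repr (q j) i := by
        intro i
        rw [q.repr_apply_apply, w.repr_apply_apply, real_inner_comm]
      rw [Finset.sum_congr rfl fun i _ => by rw [hSentry i j, hswap i]]
      rw [sum_sq_repr w (q j), q.orthonormal.1 j]
      norm_num
  obtain ⟨c, hc0, hc1, hcS⟩ := exists_eq_sum_perm_of_mem_doublyStochastic hSmem
  have hd : (fun i => (fun k => w i k) ⬝ᵥ (A *ᵥ fun k => w i k))
      = ∑ σ : Equiv.Perm (Fin n), c σ • (fun i => lam (σ i)) := by
    funext i
    rw [dot_basis_eq_S hA w i]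
    have h2 : ∀ j, S i j = ∑ σ : Equiv.Perm (Fin n), c σ * (σ.permMatrix ℝ) i j := by
      intro j
      rw [← hcS]
      simp [Matrix.sum_apply, Matrix.smul_apply, smul_eq_mul]
    calc ∑ j, (q.repr (w i) j)^2 * lam j
        = ∑ j, ∑ σ : Equiv.Perm (Fin n), c σ * (σ.permMatrix ℝ) i j * lam j := by
          refine Finset.sum_congr rfl fun j _ => ?_
          rw [← hSentry i j, h2 j, Finset.sum_mul]
      _ = ∑ σ : Equiv.Perm (Fin n), ∑ j, c σ * (σ.permMatrix ℝ) i j * lam j :=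
          Finset.sum_comm
      _ = ∑ σ : Equiv.Perm (Fin n), c σ * lam (σ i) := by
          refine Finset.sum_congr rfl fun σ _ => ?_
          rw [← permMatrix_mulVec_sum σ lam i, Finset.mul_sum]
          exact Finset.sum_congr rfl fun j _ => by ring
      _ = (∑ σ : Equiv.Perm (Fin n), c σ • (fun i => lam (σ i))) i := by
          rw [Finset.sum_apply]
          exact Finset.sum_congr rfl fun σ _ => by simp
  have hJ : Jfun n (∑ σ : Equiv.Perm (Fin n), c σ • fun i => lam (σ i))
      ≤ ∑ σ : Equiv.Perm (Fin n), c σ • Jfun n (fun i => lam (σ i)) :=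
    (convexOn_Jfun n).map_sum_le (fun σ _ => hc0 σ) hc1 (fun σ _ => Set.mem_univ _)
  calc Jfun n (fun i => (fun k => w i k) ⬝ᵥ (A *ᵥ fun k => w i k))
      = Jfun n (∑ σ : Equiv.Perm (Fin n), c σ • fun i => lam (σ i)) := by rw [hd]
    _ ≤ ∑ σ : Equiv.Perm (Fin n), c σ • Jfun n (fun i => lam (σ i)) := hJ
    _ = ∑ σ : Equiv.Perm (Fin n), c σ • Jfun n lam :=
        Finset.sum_congr rfl fun σ _ => by rw [Jfun_perm lam σ]
    _ = Jfun n lam := by rw [← Finset.sum_smul, hc1, one_smul]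

lemma eig_eq_dot {n : ℕ} {C : Matrix (Fin n) (Fin n) ℝ} (hC : C.IsHermitian) (i : Fin n) :
    hC.eigenvalues i = (fun k => hC.eigenvectorBasis i k) ⬝ᵥ
      (C *ᵥ fun k => hC.eigenvectorBasis i k) := by
  rw [eigenBasis_mulVec hC i, dotProduct_smul, dp_inner, real_inner_self_eq_norm_sq,
    hC.eigenvectorBasis.orthonormal.1 i]
  simp

end Stmt8Aux

open Stmt8Aux in
/-- Spectral representation `p̄(Y) = E_u log (∑ᵢ uᵢ² e^{λᵢ})`
and convexity of `p̄` on the symmetric matrices. -/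
theorem stmt8 (n : ℕ) (Y : Matrix (Fin n) (Fin n) ℝ) (hY : Y.IsSymm) :
    pbar Y = (∫ u, Real.log (∑ i, ((u : EuclideanSpace ℝ (Fin n)) i) ^ 2 *
        Real.exp (eigs Y i)) ∂(sphereUniform n)) ∧
      ConvexOn ℝ {A : Matrix (Fin n) (Fin n) ℝ | A.IsSymm} pbar := by
  constructor
  · have hH : Y.IsHermitian := isHerm_of_isSymm hY
    have heigs : eigs Y = hH.eigenvalues := by
      unfold eigs; rw [dif_pos hH]
    rw [pbar_eq_J Y hH, ← heigs]
    rfl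
  · constructor
    · intro A hA B hB s t hs ht hst
      have hA' : Aᵀ = A := hA
      have hB' : Bᵀ = B := hB
      show ((s • A + t • B)ᵀ = s • A + t • B)
      rw [Matrix.transpose_add, Matrix.transpose_smul, Matrix.transpose_smul, hA', hB']
    · intro A hA B hB s t hs ht hst
      have hAH : A.IsHermitian := isHerm_of_isSymm hA
      have hBH : B.IsHermitian := isHerm_of_isSymm hB
      have hCsymm : (s • A + t • B).IsSymm := by
        have hA' : Aᵀ = A := hA
        have hB' : Bᵀ = B := hB
        show ((s • A + t • B)ᵀ = s • A + t • B)
        rw [Matrix.transpose_add, Matrix.transpose_smul, Matrix.transpose_smul, hA', hB']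
      have hCH : (s • A + t • B).IsHermitian := isHerm_of_isSymm hCsymm
      set b := hCH.eigenvectorBasis with hb
      set dA : Fin n → ℝ := fun i => (fun k => b i k) ⬝ᵥ (A *ᵥ fun k => b i k) with hdA
      set dB : Fin n → ℝ := fun i => (fun k => b i k) ⬝ᵥ (B *ᵥ fun k => b i k) with hdB
      have hd2 : hCH.eigenvalues = s • dA + t • dB := by
        funext i
        rw [eig_eq_dot hCH i]
        show (fun k => b i k) ⬝ᵥ ((s • A + t • B) *ᵥ fun k => b i k) = _
        rw [Matrix.add_mulVec, Matrix.smul_mulVec, Matrix.smul_mulVec,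
          dotProduct_add, dotProduct_smul, dotProduct_smul]
        simp [dA, dB, Pi.add_apply, Pi.smul_apply, smul_eq_mul]
      have step1 : pbar (s • A + t • B) = Jfun n (s • dA + t • dB) := by
        rw [pbar_eq_J _ hCH, hd2]
      have step2 : Jfun n (s • dA + t • dB) ≤ s • Jfun n dA + t • Jfun n dB :=
        (convexOn_Jfun n).2 (Set.mem_univ dA) (Set.mem_univ dB) hs ht hst
      have step3 : Jfun n dA ≤ Jfun n hAH.eigenvalues := Jfun_frame_le hAH b
      have step4 : Jfun n dB ≤ Jfun n hBH.eigenvalues := Jfun_frame_le hBH b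
      have hfa : pbar A = Jfun n hAH.eigenvalues := pbar_eq_J A hAH
      have hfb : pbar B = Jfun n hBH.eigenvalues := pbar_eq_J B hBH
      calc pbar (s • A + t • B) = Jfun n (s • dA + t • dB) := step1
        _ ≤ s • Jfun n dA + t • Jfun n dB := step2
        _ ≤ s • pbar A + t • pbar B := by
            rw [hfa, hfb]
            simp only [smul_eq_mul]
            exact add_le_add (mul_le_mul_of_nonneg_left step3 hs)
              (mul_le_mul_of_nonneg_left step4 ht)
end
end

section
/- Let Y be a real symmetric n×n matrix with eigen-decomposition Y = Q diag(λ) Qᵀ (Q orthogonal), let u be uniformly distributed on the unit sphere S^{n-1} ⊂ ℝⁿ, and let P^{mw}(Z) = e^{Z}/tr(e^{Z}) denote the matrix multiplicative weights projection. Then P̄(Y) := E_u[e^{Y/2} u uᵀ e^{Y/2} / (uᵀ e^{Y} u)] satisfies P̄(Y) = E_u[P^{mw}(Y + Q·diag(log u_1², …, log u_n²)·Qᵀ)]; in particular P̄(Y) = Q·diag(E_u[∇lse(λ + (log u_1², …, log u_n²))])·Qᵀ, where lse(v) = log(Σ_i e^{v_i}) and ∇lse(v) = e^{v}/(Σ_i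 e^{v_i}) componentwise. -/
open MeasureTheory Matrix

noncomputable section

open scoped Pointwise

variable {n : ℕ}

/-- Linear isometry equivalence of Euclidean space from an orthogonal matrix. -/
def matIso (A : Matrix (Fin n) (Fin n) ℝ) (hA : Aᵀ * A = 1) :
    EuclideanSpace ℝ (Fin n) ≃ₗᵢ[ℝ] EuclideanSpace ℝ (Fin n) where
  toFun x := (WithLp.equiv 2 _).symm (A *ᵥ (WithLp.equiv 2 _ x))
  invFun x := (WithLp.equiv 2 _).symm (Aᵀ *ᵥ (WithLp.equiv 2 _ x))
  map_add' x y := by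
    ext k
    simp [WithLp.ofLp_add, Matrix.mulVec_add, WithLp.equiv_symm_apply, PiLp.toLp_apply]
  map_smul' c x := by
    ext k
    simp [WithLp.ofLp_smul, Matrix.mulVec_smul, WithLp.equiv_symm_apply, PiLp.toLp_apply]
  left_inv x := by
    ext k
    simp [WithLp.equiv_symm_apply, PiLp.toLp_apply, Matrix.mulVec_mulVec, hA]
  right_inv x := by
    have hA' : A * Aᵀ = 1 := mul_eq_one_comm.mp hA
    ext k
    simp [WithLp.equiv_symm_apply, PiLp.toLp_apply, Matrix.mulVec_mulVec, hA']
  norm_map' x := by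
    have key : ∀ v : Fin n → ℝ, (A *ᵥ v) ⬝ᵥ (A *ᵥ v) = v ⬝ᵥ v := by
      intro v
      have h1 : A *ᵥ v = v ᵥ* Aᵀ := (Matrix.vecMul_transpose A v).symm
      rw [Matrix.dotProduct_mulVec, h1, Matrix.vecMul_vecMul, hA, Matrix.vecMul_one]
    simp only [EuclideanSpace.norm_eq]
    congr 1
    have := key (WithLp.equiv 2 _ x)
    simp only [dotProduct] at this
    calc ∑ i, ‖(WithLp.equiv 2 _).symm (A *ᵥ (WithLp.equiv 2 _ x)) i‖ ^ 2
        = ∑ i, (A *ᵥ (WithLp.equiv 2 _ x)) i * (A *ᵥ (WithLp.equiv 2 _ x)) i := by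
          apply Finset.sum_congr rfl; intro i _
          rw [Real.norm_eq_abs, sq_abs, sq]; rfl
      _ = ∑ i, (WithLp.equiv 2 _ x) i * (WithLp.equiv 2 _ x) i := this
      _ = ∑ i, ‖x i‖ ^ 2 := by
          apply Finset.sum_congr rfl; intro i _
          rw [Real.norm_eq_abs, sq_abs, sq]; rfl

lemma matIso_coord (A : Matrix (Fin n) (Fin n) ℝ) (hA : Aᵀ * A = 1)
    (x : EuclideanSpace ℝ (Fin n)) :
    (fun k => matIso A hA x k) = A *ᵥ (fun k => x k) := rfl

/-- The measurable self-equivalence of the unit sphere induced by a linear isometry. -/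
def sphereMap (T : EuclideanSpace ℝ (Fin n) ≃ₗᵢ[ℝ] EuclideanSpace ℝ (Fin n)) :
    (Metric.sphere (0 : EuclideanSpace ℝ (Fin n)) 1) ≃ᵐ
      (Metric.sphere (0 : EuclideanSpace ℝ (Fin n)) 1) where
  toFun u := ⟨T u, by
    rcases u with ⟨x, hx⟩
    simp only [mem_sphere_iff_norm, sub_zero] at hx ⊢
    simp [T.norm_map, hx]⟩
  invFun u := ⟨T.symm u, by
    rcases u with ⟨x, hx⟩
    simp only [mem_sphere_iff_norm, sub_zero] at hx ⊢
    simp [T.symm.norm_map, hx]⟩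
  left_inv u := by ext : 1; simp
  right_inv u := by ext : 1; simp
  measurable_toFun := by
    apply Continuous.measurable
    exact Continuous.subtype_mk (T.continuous.comp continuous_subtype_val) _
  measurable_invFun := by
    apply Continuous.measurable
    exact Continuous.subtype_mk (T.symm.continuous.comp continuous_subtype_val) _

lemma sphereMap_coe (T : EuclideanSpace ℝ (Fin n) ≃ₗᵢ[ℝ] EuclideanSpace ℝ (Fin n))
    (u : Metric.sphere (0 : EuclideanSpace ℝ (Fin n)) 1) :
    ((sphereMap T u : Metric.sphere (0 : EuclideanSpace ℝ (Fin n)) 1) :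
      EuclideanSpace ℝ (Fin n)) = T u := rfl

lemma map_sphereMap_toSphere (T : EuclideanSpace ℝ (Fin n) ≃ₗᵢ[ℝ] EuclideanSpace ℝ (Fin n)) :
    Measure.map (sphereMap T) (volume : Measure (EuclideanSpace ℝ (Fin n))).toSphere =
      (volume : Measure (EuclideanSpace ℝ (Fin n))).toSphere := by
  set μ := (volume : Measure (EuclideanSpace ℝ (Fin n)))
  have hvol : ∀ C : Set (EuclideanSpace ℝ (Fin n)), μ (⇑T ⁻¹' C) = μ C := by
    intro C
    have h2 : Measure.map (⇑T.toMeasurableEquiv) μ C = μ (⇑T.toMeasurableEquiv ⁻¹' C) :=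
      MeasurableEquiv.map_apply _ _
    simp only [LinearIsometryEquiv.coe_toMeasurableEquiv] at h2
    rw [← h2, T.measurePreserving.map_eq]
  refine Measure.ext fun s hs => ?_
  rw [Measure.map_apply (sphereMap T).measurable hs,
    Measure.toSphere_apply' _ ((sphereMap T).measurable hs),
    Measure.toSphere_apply' _ hs]
  have himg : (Subtype.val '' (⇑(sphereMap T) ⁻¹' s)) = ⇑T ⁻¹' (Subtype.val '' s) := by
    ext x
    constructor
    · rintro ⟨u, hu, rfl⟩
      exact ⟨sphereMap T u, hu, rfl⟩
    · rintro ⟨v, hv, hvx⟩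
      have hx : x ∈ Metric.sphere (0 : EuclideanSpace ℝ (Fin n)) 1 := by
        have : ‖x‖ = 1 := by
          have h1 : ‖T x‖ = ‖x‖ := T.norm_map x
          have h2 : ‖(v : EuclideanSpace ℝ (Fin n))‖ = 1 := by
            have := v.2; simpa [mem_sphere_iff_norm] using this
          rw [← h1, ← hvx, h2]
        simpa [mem_sphere_iff_norm] using this
      refine ⟨⟨x, hx⟩, ?_, rfl⟩
      show sphereMap T ⟨x, hx⟩ ∈ s
      have : sphereMap T ⟨x, hx⟩ = v := by
        ext : 1
        rw [sphereMap_coe]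
        exact hvx.symm
      rwa [this]
  rw [himg]
  congr 1
  have hsmul : Set.Ioo (0:ℝ) 1 • (⇑T ⁻¹' (Subtype.val '' s)) =
      ⇑T ⁻¹' (Set.Ioo (0:ℝ) 1 • (Subtype.val '' s)) := by
    ext z
    constructor
    · rintro ⟨r, hr, y, hy, rfl⟩
      exact ⟨r, hr, T y, hy, (T.map_smul r y).symm⟩
    · rintro hz
      rcases hz with ⟨r, hr, b, hb, hrb⟩
      refine ⟨r, hr, T.symm b, by simpa using hb, ?_⟩
      have h3 := congrArg T.symm hrb
      simpa using h3
  rw [hsmul, hvol]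

lemma sphereMap_measurePreserving
    (T : EuclideanSpace ℝ (Fin n) ≃ₗᵢ[ℝ] EuclideanSpace ℝ (Fin n)) :
    MeasurePreserving (sphereMap T) (sphereUniform n) (sphereUniform n) := by
  refine ⟨(sphereMap T).measurable, ?_⟩
  unfold sphereUniform
  rw [Measure.map_smul, map_sphereMap_toSphere]

lemma integral_sphereMap (T : EuclideanSpace ℝ (Fin n) ≃ₗᵢ[ℝ] EuclideanSpace ℝ (Fin n))
    (f : (Metric.sphere (0 : EuclideanSpace ℝ (Fin n)) 1) → ℝ) :
    ∫ u, f (sphereMap T u) ∂(sphereUniform n) = ∫ u, f u ∂(sphereUniform n) :=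
  (sphereMap_measurePreserving T).integral_comp' f

instance : IsFiniteMeasure (sphereUniform n) := by
  constructor
  unfold sphereUniform
  set ν := (volume : Measure (EuclideanSpace ℝ (Fin n))).toSphere
  rw [Measure.smul_apply, smul_eq_mul]
  rcases eq_or_ne (ν Set.univ) 0 with h | h
  · simp [h]
  · rcases eq_or_ne (ν Set.univ) ⊤ with h' | h'
    · simp [h']
    · rw [ENNReal.inv_mul_cancel h h']
      exact ENNReal.one_lt_top

lemma coord_zero_measure (k : Fin n) :
    sphereUniform n {u : Metric.sphere (0 : EuclideanSpace ℝ (Fin n)) 1 |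
      (u : EuclideanSpace ℝ (Fin n)) k = 0} = 0 := by
  have hmeas : MeasurableSet {u : Metric.sphere (0 : EuclideanSpace ℝ (Fin n)) 1 |
      (u : EuclideanSpace ℝ (Fin n)) k = 0} := by
    have hc : Continuous fun u : Metric.sphere (0 : EuclideanSpace ℝ (Fin n)) 1 =>
        (u : EuclideanSpace ℝ (Fin n)) k :=
      (EuclideanSpace.proj k).continuous.comp continuous_subtype_val
    exact hc.measurable (measurableSet_singleton 0)
  unfold sphereUniform
  rw [Measure.smul_apply]
  have h0 : (volume : Measure (EuclideanSpace ℝ (Fin n))).toSphere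
      {u : Metric.sphere (0 : EuclideanSpace ℝ (Fin n)) 1 |
        (u : EuclideanSpace ℝ (Fin n)) k = 0} = 0 := by
    rw [Measure.toSphere_apply' _ hmeas]
    have hker : (volume : Measure (EuclideanSpace ℝ (Fin n)))
        (LinearMap.ker ((EuclideanSpace.proj k : EuclideanSpace ℝ (Fin n) →L[ℝ] ℝ) :
          EuclideanSpace ℝ (Fin n) →ₗ[ℝ] ℝ) : Set (EuclideanSpace ℝ (Fin n))) = 0 := by
      apply Measure.addHaar_submodule
      intro htop
      have : (EuclideanSpace.single k (1:ℝ) : EuclideanSpace ℝ (Fin n)) ∈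
          LinearMap.ker ((EuclideanSpace.proj k : EuclideanSpace ℝ (Fin n) →L[ℝ] ℝ) :
            EuclideanSpace ℝ (Fin n) →ₗ[ℝ] ℝ) := htop ▸ Submodule.mem_top
      simp [LinearMap.mem_ker] at this
    have hsub : Set.Ioo (0:ℝ) 1 • (Subtype.val ''
        {u : Metric.sphere (0 : EuclideanSpace ℝ (Fin n)) 1 |
          (u : EuclideanSpace ℝ (Fin n)) k = 0}) ⊆
        (LinearMap.ker ((EuclideanSpace.proj k : EuclideanSpace ℝ (Fin n) →L[ℝ] ℝ) :
          EuclideanSpace ℝ (Fin n) →ₗ[ℝ] ℝ) : Set (EuclideanSpace ℝ (Fin n))) := by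
      rintro z ⟨r, _, y, ⟨u, hu, rfl⟩, rfl⟩
      have h1 : (r • (u : EuclideanSpace ℝ (Fin n))) k = r * (u : EuclideanSpace ℝ (Fin n)) k := rfl
      simp only [SetLike.mem_coe, LinearMap.mem_ker]
      show (r • (u : EuclideanSpace ℝ (Fin n))) k = 0
      rw [h1, hu, mul_zero]
    have := measure_mono_null hsub hker
    rw [this, mul_zero]
  rw [h0, smul_eq_mul, mul_zero]

lemma coord_ne_zero_ae (k : Fin n) :
    ∀ᵐ (u : Metric.sphere (0 : EuclideanSpace ℝ (Fin n)) 1) ∂(sphereUniform n),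
      ((u : EuclideanSpace ℝ (Fin n)) k) ≠ 0 := by
  rw [ae_iff]
  simp only [ne_eq, not_not]
  exact coord_zero_measure k

lemma ae_all_coords :
    ∀ᵐ (u : Metric.sphere (0 : EuclideanSpace ℝ (Fin n)) 1) ∂(sphereUniform n),
      ∀ k, ((u : EuclideanSpace ℝ (Fin n)) k) ≠ 0 :=
  ae_all_iff.2 coord_ne_zero_ae

lemma mexp_conj {Q : Matrix (Fin n) (Fin n) ℝ} (hQ : Qᵀ * Q = 1) (d : Fin n → ℝ) :
    mexp (Q * Matrix.diagonal d * Qᵀ) = Q * Matrix.diagonal (fun i => Real.exp (d i)) * Qᵀ := by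
  have hQQt : Q * Qᵀ = 1 := mul_eq_one_comm.mp hQ
  have hU : IsUnit Q := ⟨⟨Q, Qᵀ, hQQt, hQ⟩, rfl⟩
  have hQinv : Q⁻¹ = Qᵀ := Matrix.inv_eq_right_inv hQQt
  unfold mexp
  rw [← hQinv, Matrix.exp_conj Q _ hU, Matrix.exp_diagonal, hQinv]
  have : NormedSpace.exp d = fun i => Real.exp (d i) := by
    rw [Pi.exp_def]
    funext i
    exact (congrFun Real.exp_eq_exp_ℝ (d i)).symm
  rw [this]

lemma Pu_eq {Q : Matrix (Fin n) (Fin n) ℝ} (hQ : Qᵀ * Q = 1) (lam : Fin n → ℝ)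
    (v : Fin n → ℝ) :
    Pu v (Q * Matrix.diagonal lam * Qᵀ) =
      Q * Matrix.of (fun k l =>
        (∑ m, Real.exp (lam m) * ((Qᵀ *ᵥ v) m)^2)⁻¹ *
        (Real.exp (2⁻¹ * lam k) * (Qᵀ *ᵥ v) k *
          (Real.exp (2⁻¹ * lam l) * (Qᵀ *ᵥ v) l))) * Qᵀ := by
  set w : Fin n → ℝ := Qᵀ *ᵥ v with hw
  set a : Fin n → ℝ := fun k => Real.exp (2⁻¹ * lam k) with ha
  set p : Fin n → ℝ := fun k => a k * w k with hp
  set c : ℝ := ∑ m, Real.exp (lam m) * (w m)^2 with hc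
  have hhalf : (2 : ℝ)⁻¹ • (Q * Matrix.diagonal lam * Qᵀ) =
      Q * Matrix.diagonal (fun k => 2⁻¹ * lam k) * Qᵀ := by
    have hd : Matrix.diagonal (fun k => 2⁻¹ * lam k) = (2:ℝ)⁻¹ • Matrix.diagonal lam := by
      rw [← Matrix.diagonal_smul]
      rfl
    rw [hd, Matrix.mul_smul, Matrix.smul_mul]
  have hexp_half : mexp ((2 : ℝ)⁻¹ • (Q * Matrix.diagonal lam * Qᵀ)) =
      Q * Matrix.diagonal a * Qᵀ := by
    rw [hhalf, mexp_conj hQ]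
  have hden : v ⬝ᵥ (mexp (Q * Matrix.diagonal lam * Qᵀ) *ᵥ v) = c := by
    rw [mexp_conj hQ, ← Matrix.mulVec_mulVec, ← Matrix.mulVec_mulVec,
      Matrix.dotProduct_mulVec v Q, ← Matrix.mulVec_transpose, ← hw]
    simp only [dotProduct, Matrix.mulVec_diagonal]
    refine Finset.sum_congr rfl fun m _ => ?_
    ring
  have hdw : Matrix.diagonal a *ᵥ w = p := by
    funext k
    rw [Matrix.mulVec_diagonal]
  have hAv : (Q * Matrix.diagonal a * Qᵀ) *ᵥ v = Q *ᵥ p := by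
    rw [← Matrix.mulVec_mulVec, ← Matrix.mulVec_mulVec, ← hw, hdw]
  have hAsymm : (Q * Matrix.diagonal a * Qᵀ)ᵀ = Q * Matrix.diagonal a * Qᵀ := by
    rw [Matrix.transpose_mul, Matrix.transpose_mul, Matrix.transpose_transpose,
      Matrix.diagonal_transpose, Matrix.mul_assoc]
  have hvA : v ᵥ* (Q * Matrix.diagonal a * Qᵀ) = Q *ᵥ p := by
    rw [← Matrix.mulVec_transpose, hAsymm, hAv]
  set A : Matrix (Fin n) (Fin n) ℝ := Q * Matrix.diagonal a * Qᵀ with hA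
  have hnum : A * Matrix.vecMulVec v v * A = Matrix.vecMulVec (Q *ᵥ p) (Q *ᵥ p) := by
    rw [Matrix.vecMulVec_eq (Fin 1), Matrix.vecMulVec_eq (Fin 1)]
    have hcol : Matrix.replicateCol (Fin 1) (Q *ᵥ p) = A * Matrix.replicateCol (Fin 1) v := by
      rw [← hAv, Matrix.replicateCol_mulVec]
    have hrow : Matrix.replicateRow (Fin 1) (Q *ᵥ p) = Matrix.replicateRow (Fin 1) v * A := by
      rw [← hvA, Matrix.replicateRow_vecMul]
    rw [hcol, hrow]
    simp only [Matrix.mul_assoc]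
  have hof : Matrix.of (fun k l => c⁻¹ * (a k * w k * (a l * w l))) =
      c⁻¹ • Matrix.vecMulVec p p := by
    ext k l
    simp only [Matrix.of_apply, Matrix.smul_apply, Matrix.vecMulVec_apply, hp, smul_eq_mul]
  unfold Pu
  rw [hden, hexp_half, hnum]
  show _ = Q * Matrix.of (fun k l => c⁻¹ * (a k * w k * (a l * w l))) * Qᵀ
  rw [hof, Matrix.mul_smul, Matrix.smul_mul]
  congr 1
  rw [Matrix.vecMulVec_eq (Fin 1), Matrix.vecMulVec_eq (Fin 1)]
  have h1 : Matrix.replicateCol (Fin 1) (Q *ᵥ p) = Q * Matrix.replicateCol (Fin 1) p := Matrix.replicateCol_mulVec _ _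
  have h2 : Matrix.replicateRow (Fin 1) (Q *ᵥ p) = Matrix.replicateRow (Fin 1) p * Qᵀ := by
    rw [← Matrix.vecMul_transpose, Matrix.replicateRow_vecMul]
  rw [h1, h2]
  simp only [Matrix.mul_assoc]

lemma conj_add_conj {Q : Matrix (Fin n) (Fin n) ℝ} (lam d : Fin n → ℝ) :
    Q * Matrix.diagonal lam * Qᵀ + Q * Matrix.diagonal d * Qᵀ =
      Q * Matrix.diagonal (fun k => lam k + d k) * Qᵀ := by
  have : Matrix.diagonal (fun k => lam k + d k) = Matrix.diagonal lam + Matrix.diagonal d := by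
    rw [Matrix.diagonal_add]
  rw [this, Matrix.mul_add, Matrix.add_mul]

lemma trace_conj {Q : Matrix (Fin n) (Fin n) ℝ} (hQ : Qᵀ * Q = 1) (d : Fin n → ℝ) :
    (Q * Matrix.diagonal d * Qᵀ).trace = ∑ k, d k := by
  rw [Matrix.trace_mul_cycle, hQ, Matrix.one_mul, Matrix.trace_diagonal]

lemma Pmw_eq {Q : Matrix (Fin n) (Fin n) ℝ} (hQ : Qᵀ * Q = 1) (e : Fin n → ℝ) :
    Pmw (Q * Matrix.diagonal e * Qᵀ) =
      Q * Matrix.diagonal (fun k => Real.exp (e k) / ∑ j, Real.exp (e j)) * Qᵀ := by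
  unfold Pmw
  rw [mexp_conj hQ, trace_conj hQ]
  have hd : Matrix.diagonal (fun k => Real.exp (e k) / ∑ j, Real.exp (e j)) =
      (∑ j, Real.exp (e j))⁻¹ • Matrix.diagonal (fun k => Real.exp (e k)) := by
    have hfun : (fun k => Real.exp (e k) / ∑ j, Real.exp (e j)) =
        (∑ j, Real.exp (e j))⁻¹ • (fun k => Real.exp (e k)) := by
      funext k
      simp [div_eq_inv_mul]
    rw [hfun, Matrix.diagonal_smul]
  rw [hd, Matrix.mul_smul, Matrix.smul_mul]

instance : CompactSpace (Metric.sphere (0 : EuclideanSpace ℝ (Fin n)) 1) :=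
  Metric.sphere.compactSpace _ _

lemma conj_entry (Q M : Matrix (Fin n) (Fin n) ℝ) (i j : Fin n) :
    (Q * M * Qᵀ) i j = ∑ l, ∑ k, (Q i k * Q j l) * M k l := by
  rw [Matrix.mul_apply]
  refine Finset.sum_congr rfl fun l _ => ?_
  rw [Matrix.transpose_apply, Matrix.mul_apply, Finset.sum_mul]
  refine Finset.sum_congr rfl fun k _ => ?_
  ring

lemma conj_diag_entry (Q : Matrix (Fin n) (Fin n) ℝ) (v : Fin n → ℝ) (i j : Fin n) :
    (Q * Matrix.diagonal v * Qᵀ) i j = ∑ k, (Q i k * Q j k) * v k := by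
  rw [Matrix.mul_apply]
  refine Finset.sum_congr rfl fun k _ => ?_
  rw [Matrix.transpose_apply, Matrix.mul_diagonal]
  ring

lemma dot_mulVec_self {A : Matrix (Fin n) (Fin n) ℝ} (hA : Aᵀ * A = 1) (v : Fin n → ℝ) :
    (A *ᵥ v) ⬝ᵥ (A *ᵥ v) = v ⬝ᵥ v := by
  have h1 : A *ᵥ v = v ᵥ* Aᵀ := (Matrix.vecMul_transpose A v).symm
  rw [Matrix.dotProduct_mulVec, h1, Matrix.vecMul_vecMul, hA, Matrix.vecMul_one]

/-- `P̄(Y) = E_u P^{mw}(Y + Q diag(log uᵢ²) Qᵀ)`; in particular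
`P̄(Y) = Q diag(E_u ∇lse(λ + log u²)) Qᵀ`. -/
theorem stmt9 (n : ℕ) (Y Q : Matrix (Fin n) (Fin n) ℝ) (lam : Fin n → ℝ)
    (hQ : Qᵀ * Q = 1) (hY : Y = Q * Matrix.diagonal lam * Qᵀ) :
    Pbar Y = (Matrix.of fun i j => ∫ u,
        Pmw (Y + Q * Matrix.diagonal
          (fun k => Real.log (((u : EuclideanSpace ℝ (Fin n)) k) ^ 2)) * Qᵀ) i j
        ∂(sphereUniform n)) ∧
      Pbar Y = Q * Matrix.diagonal (fun i => ∫ u,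
        Real.exp (lam i + Real.log (((u : EuclideanSpace ℝ (Fin n)) i) ^ 2)) /
          ∑ j, Real.exp (lam j + Real.log (((u : EuclideanSpace ℝ (Fin n)) j) ^ 2))
        ∂(sphereUniform n)) * Qᵀ := by
  subst hY
  rcases Nat.eq_zero_or_pos n with hn | hn
  · subst hn
    exact ⟨Matrix.ext fun i => i.elim0, Matrix.ext fun i => i.elim0⟩
  haveI : Nonempty (Fin n) := ⟨⟨0, hn⟩⟩
  set ν := sphereUniform n with hν
  set x : Metric.sphere (0 : EuclideanSpace ℝ (Fin n)) 1 → Fin n → ℝ :=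
    fun u k => (u : EuclideanSpace ℝ (Fin n)) k with hxdef
  set N : (Fin n → ℝ) → Fin n → Fin n → ℝ := fun w k l =>
    (∑ m, Real.exp (lam m) * (w m)^2)⁻¹ *
      (Real.exp (2⁻¹ * lam k) * w k * (Real.exp (2⁻¹ * lam l) * w l)) with hNdef
  set g : Metric.sphere (0 : EuclideanSpace ℝ (Fin n)) 1 → Fin n → ℝ := fun u k =>
    Real.exp (lam k + Real.log ((x u k)^2)) /
      ∑ j, Real.exp (lam j + Real.log ((x u j)^2)) with hgdef
  set I : Fin n → ℝ := fun k => ∫ u, g u k ∂ν with hIdef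
  -- basic facts
  have hx_sum : ∀ u, ∑ k, (x u k)^2 = 1 := by
    intro u
    have hu : ‖(u : EuclideanSpace ℝ (Fin n))‖ = 1 := by
      have := u.2
      rwa [mem_sphere_zero_iff_norm] at this
    rw [EuclideanSpace.norm_eq] at hu
    have h2 : ∑ k, ‖(u : EuclideanSpace ℝ (Fin n)) k‖ ^ 2 = 1 := by
      have := congrArg (fun t => t ^ 2) hu
      simpa [Real.sq_sqrt (Finset.sum_nonneg fun k _ => sq_nonneg _)] using this
    calc ∑ k, (x u k)^2 = ∑ k, ‖(u : EuclideanSpace ℝ (Fin n)) k‖ ^ 2 := by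
          refine Finset.sum_congr rfl fun k _ => ?_
          rw [Real.norm_eq_abs, sq_abs]
      _ = 1 := h2
  have hw_sum : ∀ u, ∑ k, ((Qᵀ *ᵥ x u) k)^2 = 1 := by
    intro u
    have hQt : (Qᵀ)ᵀ * Qᵀ = 1 := by
      rw [Matrix.transpose_transpose]
      exact mul_eq_one_comm.mp hQ
    have h := dot_mulVec_self hQt (x u)
    have h1 : ∑ k, ((Qᵀ *ᵥ x u) k)^2 = (Qᵀ *ᵥ x u) ⬝ᵥ (Qᵀ *ᵥ x u) := by
      simp [dotProduct, sq]
    have h2 : (x u) ⬝ᵥ (x u) = ∑ k, (x u k)^2 := by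
      simp [dotProduct, sq]
    rw [h1, h, h2, hx_sum u]
  have hden_pos : ∀ v : Fin n → ℝ, (∑ k, (v k)^2 = 1) →
      0 < ∑ m, Real.exp (lam m) * (v m)^2 := by
    intro v hv
    obtain ⟨k, hk⟩ : ∃ k, v k ≠ 0 := by
      by_contra h
      push_neg at h
      rw [Finset.sum_eq_zero (fun k _ => by rw [h k, zero_pow two_ne_zero])] at hv
      exact zero_ne_one hv
    refine Finset.sum_pos' (fun m _ => mul_nonneg (Real.exp_pos _).le (sq_nonneg _)) ?_
    exact ⟨k, Finset.mem_univ k,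
      mul_pos (Real.exp_pos _) ((sq_nonneg _).lt_of_ne (Ne.symm (pow_ne_zero 2 hk)))⟩
  have hxc : Continuous x :=
    continuous_pi fun k => (EuclideanSpace.proj k).continuous.comp continuous_subtype_val
  have hwc : Continuous (fun u => Qᵀ *ᵥ x u) := by
    refine continuous_pi fun m => ?_
    simp only [Matrix.mulVec, dotProduct]
    exact continuous_finset_sum _ fun k _ =>
      continuous_const.mul ((continuous_apply k).comp hxc)
  -- integrability of N entries
  have h_int_N : ∀ k l, Integrable (fun u => N (Qᵀ *ᵥ x u) k l) ν := by
    intro k l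
    have hden_c : Continuous (fun u => ∑ m, Real.exp (lam m) * ((Qᵀ *ᵥ x u) m)^2) :=
      continuous_finset_sum _ fun m _ =>
        continuous_const.mul (((continuous_apply m).comp hwc).pow 2)
    have hcont : Continuous (fun u => N (Qᵀ *ᵥ x u) k l) := by
      refine Continuous.mul (hden_c.inv₀ fun u => (hden_pos _ (hw_sum u)).ne') ?_
      exact ((continuous_const.mul ((continuous_apply k).comp hwc)).mul
        (continuous_const.mul ((continuous_apply l).comp hwc)))
    exact hcont.integrable_of_hasCompactSupport (HasCompactSupport.of_compactSpace _)
  -- measurability and integrability of g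
  haveI : IsFiniteMeasure ν := by rw [hν]; infer_instance
  have hterm_pos : ∀ (u) (j : Fin n), 0 < Real.exp (lam j + Real.log ((x u j)^2)) :=
    fun u j => Real.exp_pos _
  have h_g_int : ∀ k, Integrable (fun u => g u k) ν := by
    intro k
    have hmj : ∀ j : Fin n, Measurable (fun u => x u j) := fun j =>
      ((EuclideanSpace.proj j).continuous.comp continuous_subtype_val).measurable
    have hme : ∀ j : Fin n, Measurable (fun u => Real.exp (lam j + Real.log ((x u j)^2))) :=
      fun j => Real.measurable_exp.comp
        ((Real.measurable_log.comp ((hmj j).pow_const 2)).const_add (lam j))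
    have hm : Measurable (fun u => g u k) := by
      simp only [hgdef]
      exact (hme k).div (Finset.measurable_sum _ fun j _ => hme j)
    have hbound : ∀ u, ‖g u k‖ ≤ 1 := by
      intro u
      have hden : 0 < ∑ j, Real.exp (lam j + Real.log ((x u j)^2)) :=
        Finset.sum_pos (fun j _ => hterm_pos u j) Finset.univ_nonempty
      have hnum_le : Real.exp (lam k + Real.log ((x u k)^2)) ≤
          ∑ j, Real.exp (lam j + Real.log ((x u j)^2)) :=
        Finset.single_le_sum (fun j _ => (hterm_pos u j).le) (Finset.mem_univ k)
      have hnn : 0 ≤ g u k := div_nonneg (hterm_pos u k).le hden.le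
      rw [Real.norm_eq_abs, abs_of_nonneg hnn]
      exact (div_le_one hden).2 hnum_le
    exact ⟨hm.aestronglyMeasurable, HasFiniteIntegral.of_bounded (ae_of_all _ hbound)⟩
  -- change of variables
  have hchg : ∀ k l, (∫ u, N (Qᵀ *ᵥ x u) k l ∂ν) = ∫ u, N (x u) k l ∂ν := by
    intro k l
    have h := integral_sphereMap (matIso Q hQ) (fun u => N (Qᵀ *ᵥ x u) k l)
    have hcoord : ∀ u, Qᵀ *ᵥ x (sphereMap (matIso Q hQ) u) = x u := by
      intro u
      have h1 : x (sphereMap (matIso Q hQ) u) = Q *ᵥ x u := by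
        funext m
        exact congrFun (matIso_coord Q hQ (u : EuclideanSpace ℝ (Fin n))) m
      rw [h1, Matrix.mulVec_mulVec, hQ, Matrix.one_mulVec]
    calc (∫ u, N (Qᵀ *ᵥ x u) k l ∂ν)
        = ∫ u, N (Qᵀ *ᵥ x (sphereMap (matIso Q hQ) u)) k l ∂ν := h.symm
      _ = ∫ u, N (x u) k l ∂ν := by
          refine integral_congr_ae (ae_of_all _ fun u => ?_)
          show N (Qᵀ *ᵥ x (sphereMap (matIso Q hQ) u)) k l = N (x u) k l
          rw [hcoord u]
  -- off-diagonal vanishing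
  have hoff : ∀ k l, k ≠ l → (∫ u, N (x u) k l ∂ν) = 0 := by
    intro k l hkl
    set r : Fin n → ℝ := fun m => if m = k then -1 else 1 with hrdef
    have hR : (Matrix.diagonal r)ᵀ * Matrix.diagonal r = 1 := by
      rw [Matrix.diagonal_transpose, Matrix.diagonal_mul_diagonal]
      have : (fun m => r m * r m) = fun _ => (1:ℝ) := by
        funext m
        by_cases h : m = k <;> simp [hrdef, h]
      rw [this, Matrix.diagonal_one]
    have h := integral_sphereMap (matIso (Matrix.diagonal r) hR) (fun u => N (x u) k l)
    have hkey : ∀ u, N (x (sphereMap (matIso (Matrix.diagonal r) hR) u)) k l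
        = - N (x u) k l := by
      intro u
      have h1 : x (sphereMap (matIso (Matrix.diagonal r) hR) u) = Matrix.diagonal r *ᵥ x u := by
        funext m
        exact congrFun (matIso_coord (Matrix.diagonal r) hR (u : EuclideanSpace ℝ (Fin n))) m
      rw [h1]
      have hcm : ∀ m, (Matrix.diagonal r *ᵥ x u) m = r m * x u m :=
        fun m => Matrix.mulVec_diagonal r (x u) m
      have hden : ∑ m, Real.exp (lam m) * ((Matrix.diagonal r *ᵥ x u) m)^2
          = ∑ m, Real.exp (lam m) * (x u m)^2 := by
        refine Finset.sum_congr rfl fun m _ => ?_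
        rw [hcm m]
        by_cases h : m = k
        · simp [hrdef, h]
        · simp [hrdef, h]
      simp only [hNdef]
      rw [hden, hcm k, hcm l]
      have hrk : r k = -1 := by simp [hrdef]
      have hrl : r l = 1 := by simp [hrdef, (Ne.symm hkl : l ≠ k)]
      rw [hrk, hrl]
      ring
    have h2 : (∫ u, N (x u) k l ∂ν) = - ∫ u, N (x u) k l ∂ν := by
      conv_lhs => rw [← h]
      rw [integral_congr_ae (ae_of_all _ fun u => hkey u), integral_neg]
    linarith
  -- diagonal identification
  have hdiag : ∀ k, (∫ u, N (x u) k k ∂ν) = I k := by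
    intro k
    rw [hIdef]
    refine integral_congr_ae ?_
    filter_upwards [ae_all_coords (n := n)] with u hu
    have hx2 : ∀ j, 0 < (x u j)^2 := fun j =>
      (sq_nonneg _).lt_of_ne (Ne.symm (pow_ne_zero 2 (hu j)))
    have hterm : ∀ j, Real.exp (lam j + Real.log ((x u j)^2))
        = Real.exp (lam j) * (x u j)^2 := fun j => by
      rw [Real.exp_add, Real.exp_log (hx2 j)]
    have hehalf : Real.exp (2⁻¹ * lam k) * Real.exp (2⁻¹ * lam k) = Real.exp (lam k) := by
      rw [← Real.exp_add]
      ring_nf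
    simp only [hNdef, hgdef]
    rw [hterm k, Finset.sum_congr rfl (fun j _ => hterm j)]
    rw [inv_mul_eq_div]
    congr 1
    calc Real.exp (2⁻¹ * lam k) * x u k * (Real.exp (2⁻¹ * lam k) * x u k)
        = Real.exp (2⁻¹ * lam k) * Real.exp (2⁻¹ * lam k) * (x u k)^2 := by ring
      _ = Real.exp (lam k) * (x u k)^2 := by rw [hehalf]
  -- main entry computation
  have hsecond : Pbar (Q * Matrix.diagonal lam * Qᵀ) = Q * Matrix.diagonal I * Qᵀ := by
    refine Matrix.ext fun i j => ?_
    have hPb : Pbar (Q * Matrix.diagonal lam * Qᵀ) i j =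
        ∫ u, Pu (x u) (Q * Matrix.diagonal lam * Qᵀ) i j ∂ν := rfl
    have step1 : ∀ u, Pu (x u) (Q * Matrix.diagonal lam * Qᵀ) i j =
        ∑ l, ∑ k, (Q i k * Q j l) * N (Qᵀ *ᵥ x u) k l := by
      intro u
      rw [Pu_eq hQ lam (x u), conj_entry]
      simp only [Matrix.of_apply, hNdef]
    calc Pbar (Q * Matrix.diagonal lam * Qᵀ) i j
        = ∫ u, ∑ l, ∑ k, (Q i k * Q j l) * N (Qᵀ *ᵥ x u) k l ∂ν := by
          rw [hPb]
          exact integral_congr_ae (ae_of_all _ fun u => step1 u)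
      _ = ∑ l, ∑ k, (Q i k * Q j l) * ∫ u, N (Qᵀ *ᵥ x u) k l ∂ν := by
          rw [integral_finset_sum _ (fun l _ =>
            integrable_finset_sum _ (fun k _ => ((h_int_N k l).const_mul _)))]
          refine Finset.sum_congr rfl fun l _ => ?_
          rw [integral_finset_sum _ (fun k _ => (h_int_N k l).const_mul _)]
          exact Finset.sum_congr rfl fun k _ => integral_const_mul _ _
      _ = ∑ l, ∑ k, (Q i k * Q j l) * (if k = l then I k else 0) := by
          refine Finset.sum_congr rfl fun l _ => Finset.sum_congr rfl fun k _ => ?_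
          congr 1
          by_cases hkl : k = l
          · subst hkl
            rw [if_pos rfl, hchg k k, hdiag k]
          · rw [if_neg hkl, hchg k l, hoff k l hkl]
      _ = ∑ k, (Q i k * Q j k) * I k := by
          refine Finset.sum_congr rfl fun l _ => ?_
          rw [Finset.sum_eq_single l]
          · simp
          · intro b _ hb
            simp [hb]
          · intro h
            exact absurd (Finset.mem_univ l) h
      _ = (Q * Matrix.diagonal I * Qᵀ) i j := (conj_diag_entry Q I i j).symm
  have hfirst : (Matrix.of fun i j => ∫ u,
      Pmw (Q * Matrix.diagonal lam * Qᵀ + Q * Matrix.diagonal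
        (fun k => Real.log (((u : EuclideanSpace ℝ (Fin n)) k) ^ 2)) * Qᵀ) i j ∂ν) =
      Q * Matrix.diagonal I * Qᵀ := by
    refine Matrix.ext fun i j => ?_
    rw [Matrix.of_apply]
    have hpt : ∀ u : Metric.sphere (0 : EuclideanSpace ℝ (Fin n)) 1,
        Pmw (Q * Matrix.diagonal lam * Qᵀ + Q * Matrix.diagonal
        (fun k => Real.log (((u : EuclideanSpace ℝ (Fin n)) k) ^ 2)) * Qᵀ) i j =
        ∑ k, (Q i k * Q j k) * g u k := by
      intro u
      rw [conj_add_conj, Pmw_eq hQ, conj_diag_entry]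
    calc (∫ u, Pmw (Q * Matrix.diagonal lam * Qᵀ + Q * Matrix.diagonal
          (fun k => Real.log (((u : EuclideanSpace ℝ (Fin n)) k) ^ 2)) * Qᵀ) i j ∂ν)
        = ∫ u, ∑ k, (Q i k * Q j k) * g u k ∂ν :=
          integral_congr_ae (ae_of_all _ fun u => hpt u)
      _ = ∑ k, (Q i k * Q j k) * I k := by
          rw [integral_finset_sum _ (fun k _ => (h_g_int k).const_mul _)]
          exact Finset.sum_congr rfl fun k _ => integral_const_mul _ _
      _ = (Q * Matrix.diagonal I * Qᵀ) i j := (conj_diag_entry Q I i j).symm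
  exact ⟨hsecond.trans hfirst.symm, hsecond⟩
end
end

section
/- For any real symmetric n×n matrices Y and D, the function φ(t) = log tr(e^{Y + tD}) is twice differentiable and satisfies φ''(0) ≤ tr(D² e^{Y}) / tr(e^{Y}); equivalently, the second directional derivative of the matrix softmax p^{mw}(Y) = log tr(e^{Y}) in direction D is bounded by ⟨D², P^{mw}(Y)⟩, where P^{mw}(Y) = e^{Y}/tr(e^{Y}) and ⟨A,B⟩ = tr(AᵀB). -/
open MeasureTheory Matrix

noncomputable section

section Aux
open Nat
attribute [local instance] Matrix.linftyOpNormedAddCommGroup Matrix.linftyOpNormedRing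
  Matrix.linftyOpNormedAlgebra Matrix.linfty_opNormOneClass

abbrev Mat (n : ℕ) := Matrix (Fin n) (Fin n) ℝ

section Norms

abbrev matTopo (n : ℕ) : TopologicalSpace (Mat n) :=
  (Matrix.linftyOpNormedAddCommGroup : NormedAddCommGroup (Mat n)).toUniformSpace.toTopologicalSpace

attribute [local instance] matTopo

variable {n : ℕ}

def trCLM (n : ℕ) : Mat n →L[ℝ] ℝ :=
  LinearMap.toContinuousLinearMap (Matrix.traceLinearMap (Fin n) ℝ ℝ)

@[simp] lemma trCLM_apply (X : Mat n) : trCLM n X = X.trace := rfl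

lemma tr_le (X : Mat n) : |X.trace| ≤ ‖trCLM n‖ * ‖X‖ := by
  simpa [Real.norm_eq_abs] using (trCLM n).le_opNorm X

lemma hasDerivAt_affine (A B : Mat n) (t : ℝ) :
    HasDerivAt (fun s : ℝ => A + s • B) B t := by
  simpa using ((hasDerivAt_id t).smul_const B).const_add A

lemma hasDerivAt_affpow (A B : Mat n) (k : ℕ) (t : ℝ) :
    HasDerivAt (fun s : ℝ => (A + s • B) ^ k)
      (∑ i ∈ Finset.range k,
        (A + t • B) ^ i * B * (A + t • B) ^ (k - 1 - i)) t := by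
  induction k with
  | zero => simpa using hasDerivAt_const t (1 : Mat n)
  | succ k ih =>
    have h := ih.mul (hasDerivAt_affine A B t)
    have e : (∑ i ∈ Finset.range k, (A + t • B) ^ i * B * (A + t • B) ^ (k - 1 - i)) *
          (A + t • B) + (A + t • B) ^ k * B
        = ∑ i ∈ Finset.range (k + 1),
            (A + t • B) ^ i * B * (A + t • B) ^ (k - i) := by
      rw [Finset.sum_range_succ, Finset.sum_mul]
      congr 1
      · refine Finset.sum_congr rfl fun i hi => ?_
        rw [Finset.mem_range] at hi
        rw [mul_assoc, ← pow_succ]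
        congr 2
        omega
      · simp
    simpa [pow_succ, e, Pi.mul_def] using h

/-- deriv of `s ↦ tr ((A+sB)^k)` -/
lemma hasDerivAt_trpow (A B : Mat n) (k : ℕ) (s : ℝ) :
    HasDerivAt (fun z : ℝ => ((k ! : ℝ)⁻¹) * ((A + z • B) ^ k).trace)
      (((k ! : ℝ)⁻¹ * (k : ℝ)) * (((A + s • B) ^ (k - 1)) * B).trace) s := by
  have h0 := hasDerivAt_affpow A B k s
  have h1 := ((trCLM n).hasFDerivAt.comp_hasDerivAt s h0).const_mul ((k ! : ℝ)⁻¹)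
  have e : trCLM n (∑ i ∈ Finset.range k,
        (A + s • B) ^ i * B * (A + s • B) ^ (k - 1 - i))
      = (k : ℝ) * (((A + s • B) ^ (k - 1)) * B).trace := by
    rw [trCLM_apply, Matrix.trace_sum]
    have key : ∀ i ∈ Finset.range k,
        ((A + s • B) ^ i * B * (A + s • B) ^ (k - 1 - i)).trace
          = (((A + s • B) ^ (k - 1)) * B).trace := by
      intro i hi
      rw [Finset.mem_range] at hi
      rw [Matrix.trace_mul_cycle, ← pow_add]
      have e2 : k - 1 - i + i = k - 1 := by omega
      rw [e2]
    rw [Finset.sum_congr rfl key, Finset.sum_const, Finset.card_range, nsmul_eq_mul]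
  rw [e, ← mul_assoc] at h1
  exact h1

/-- deriv of `s ↦ c k * tr ((A+sB)^(k-1) * B)` -/
lemma hasDerivAt_trpow' (A B : Mat n) (k : ℕ) (s : ℝ) :
    HasDerivAt
      (fun z : ℝ => ((k ! : ℝ)⁻¹ * (k : ℝ)) * (((A + z • B) ^ (k - 1)) * B).trace)
      (((k ! : ℝ)⁻¹ * (k : ℝ)) *
        ((∑ i ∈ Finset.range (k - 1),
            (A + s • B) ^ i * B * (A + s • B) ^ (k - 1 - 1 - i)) * B).trace)
      s := by
  have h0 := (hasDerivAt_affpow A B (k - 1) s).mul_const B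
  have h1 := ((trCLM n).hasFDerivAt.comp_hasDerivAt s h0).const_mul ((k ! : ℝ)⁻¹ * (k : ℝ))
  exact h1

lemma trace_exp_eq_tsum (X : Mat n) :
    (NormedSpace.exp X).trace = ∑' (k : ℕ), ((k ! : ℝ)⁻¹ * (X ^ k).trace) := by
  have h := (trCLM n).map_tsum (NormedSpace.expSeries_summable' (𝕂 := ℝ) X)
  rw [NormedSpace.exp_eq_tsum ℝ]
  simpa [Matrix.trace_smul, smul_eq_mul] using h

def Fm (A B : Mat n) : ℝ → ℝ := fun s => (NormedSpace.exp (A + s • B)).trace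

def F1 (A B : Mat n) : ℝ → ℝ := fun s =>
  ∑' (k : ℕ), ((k ! : ℝ)⁻¹ * (k : ℝ)) * (((A + s • B) ^ (k - 1)) * B).trace

def F2 (A B : Mat n) : ℝ → ℝ := fun s =>
  ∑' (k : ℕ), ((k ! : ℝ)⁻¹ * (k : ℝ)) *
    ((∑ i ∈ Finset.range (k - 1),
        (A + s • B) ^ i * B * (A + s • B) ^ (k - 1 - 1 - i)) * B).trace

lemma sum1 (x : ℝ) : Summable (fun k : ℕ => (k : ℝ) * x ^ (k - 1) / k !) := by
  rw [← summable_nat_add_iff 1]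
  have e : (fun k : ℕ => ((k + 1 : ℕ) : ℝ) * x ^ (k + 1 - 1) / (k + 1)!)
      = fun k : ℕ => x ^ k / k ! := by
    funext k
    have h : ((k + 1)! : ℝ) = (k + 1) * k ! := by
      rw [Nat.factorial_succ]; push_cast; ring
    rw [h]
    have hk : ((k : ℝ) + 1) ≠ 0 := by positivity
    push_cast
    field_simp
  rw [e]
  exact Real.summable_pow_div_factorial x

lemma sum2 (x : ℝ) :
    Summable (fun k : ℕ => (k : ℝ) * ((k - 1 : ℕ) : ℝ) * x ^ (k - 2) / k !) := by
  rw [← summable_nat_add_iff 2]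
  have e : (fun k : ℕ => ((k + 2 : ℕ) : ℝ) * ((k + 2 - 1 : ℕ) : ℝ) * x ^ (k + 2 - 2) / (k + 2)!)
      = fun k : ℕ => x ^ k / k ! := by
    funext k
    have h : ((k + 2)! : ℝ) = (k + 2) * ((k + 1) * k !) := by
      rw [show k + 2 = (k + 1) + 1 by ring, Nat.factorial_succ, Nat.factorial_succ]
      push_cast; ring
    have h2 : (k + 2 - 1 : ℕ) = k + 1 := by omega
    rw [h, h2]
    have hk1 : ((k : ℝ) + 1) ≠ 0 := by positivity
    have hk2 : ((k : ℝ) + 2) ≠ 0 := by positivity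
    push_cast
    field_simp
  rw [e]
  exact Real.summable_pow_div_factorial x

variable [Nonempty (Fin n)]

lemma norm_affine_le (A B : Mat n) {R : ℝ} {s : ℝ} (hs : |s| ≤ R) :
    ‖A + s • B‖ ≤ ‖A‖ + R * ‖B‖ := by
  calc ‖A + s • B‖ ≤ ‖A‖ + ‖s • B‖ := norm_add_le _ _
  _ ≤ ‖A‖ + R * ‖B‖ := by
      rw [norm_smul, Real.norm_eq_abs]
      exact add_le_add (le_refl _) (mul_le_mul_of_nonneg_right hs (norm_nonneg B))

lemma hasDerivAt_Fm (A B : Mat n) (t : ℝ) : HasDerivAt (Fm A B) (F1 A B t) t := by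
  classical
  set R : ℝ := |t| + 1 with hR
  set r : ℝ := ‖A‖ + R * ‖B‖ with hrdef
  have hr0 : (0 : ℝ) ≤ r := by positivity
  set C : ℝ := ‖trCLM n‖ with hC
  have hC0 : (0 : ℝ) ≤ C := norm_nonneg _
  have key := hasDerivAt_tsum_of_isPreconnected
    (u := fun k : ℕ => (C * ‖B‖) * ((k : ℝ) * r ^ (k - 1) / k !))
    (g := fun (k : ℕ) (z : ℝ) => ((k ! : ℝ)⁻¹) * ((A + z • B) ^ k).trace)
    (g' := fun (k : ℕ) (z : ℝ) =>
      ((k ! : ℝ)⁻¹ * (k : ℝ)) * (((A + z • B) ^ (k - 1)) * B).trace)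
    (((sum1 r).mul_left (C * ‖B‖))) (Metric.isOpen_ball (x := (0:ℝ)) (ε := R))
    ((convex_ball (0:ℝ) R).isPreconnected)
    (fun k z _ => hasDerivAt_trpow A B k z)
    (fun k z hz => ?_) (y₀ := t) ?_ ?_ (y := t) ?_
  · have hFm : Fm A B = fun z : ℝ => ∑' (k : ℕ), ((k ! : ℝ)⁻¹ * ((A + z • B) ^ k).trace) :=
      funext fun z => trace_exp_eq_tsum _
    rw [hFm, F1]
    exact key
  · -- derivative bound
    rw [mem_ball_zero_iff, Real.norm_eq_abs] at hz
    show ‖((k ! : ℝ)⁻¹ * (k : ℝ)) * (((A + z • B) ^ (k - 1)) * B).trace‖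
      ≤ (C * ‖B‖) * ((k : ℝ) * r ^ (k - 1) / k !)
    have hM : ‖A + z • B‖ ≤ r := norm_affine_le A B hz.le
    have h1 : ‖(A + z • B) ^ (k - 1) * B‖ ≤ r ^ (k - 1) * ‖B‖ := by
      calc ‖(A + z • B) ^ (k - 1) * B‖ ≤ ‖(A + z • B) ^ (k - 1)‖ * ‖B‖ := norm_mul_le _ _
      _ ≤ r ^ (k - 1) * ‖B‖ := by
          refine mul_le_mul_of_nonneg_right ?_ (norm_nonneg _)
          exact (norm_pow_le _ _).trans (pow_le_pow_left₀ (norm_nonneg _) hM _)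
    have h2 : |(((A + z • B) ^ (k - 1)) * B).trace| ≤ C * (r ^ (k - 1) * ‖B‖) :=
      (tr_le _).trans (mul_le_mul_of_nonneg_left h1 hC0)
    rw [Real.norm_eq_abs, abs_mul]
    have h3 : |(k ! : ℝ)⁻¹ * (k : ℝ)| = (k : ℝ) / k ! := by
      rw [abs_mul, abs_inv, Nat.abs_cast, Nat.abs_cast]
      rw [inv_mul_eq_div]
    rw [h3]
    calc (k : ℝ) / k ! * |(((A + z • B) ^ (k - 1)) * B).trace|
        ≤ (k : ℝ) / k ! * (C * (r ^ (k - 1) * ‖B‖)) := by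
          exact mul_le_mul_of_nonneg_left h2 (by positivity)
      _ = C * ‖B‖ * ((k : ℝ) * r ^ (k - 1) / k !) := by ring
  · rw [mem_ball_zero_iff, Real.norm_eq_abs]; exact lt_add_one _
  · -- summability at t
    refine Summable.of_norm_bounded (g := fun k => C * (‖A + t • B‖ ^ k / k !))
      ((Real.summable_pow_div_factorial _).mul_left C) (fun k => ?_)
    show ‖((k ! : ℝ)⁻¹) * ((A + t • B) ^ k).trace‖ ≤ C * (‖A + t • B‖ ^ k / k !)
    rw [Real.norm_eq_abs, abs_mul, abs_inv, Nat.abs_cast]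
    have := (tr_le ((A + t • B) ^ k)).trans
      (mul_le_mul_of_nonneg_left (norm_pow_le _ k) hC0)
    calc (k ! : ℝ)⁻¹ * |((A + t • B) ^ k).trace| ≤ (k ! : ℝ)⁻¹ * (C * ‖A + t • B‖ ^ k) :=
          mul_le_mul_of_nonneg_left this (by positivity)
      _ = C * (‖A + t • B‖ ^ k / k !) := by ring
  · rw [mem_ball_zero_iff, Real.norm_eq_abs]; exact lt_add_one _

lemma hasDerivAt_F1 (A B : Mat n) (t : ℝ) : HasDerivAt (F1 A B) (F2 A B t) t := by
  classical
  set R : ℝ := |t| + 1 with hR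
  set r : ℝ := ‖A‖ + R * ‖B‖ with hrdef
  have hr0 : (0 : ℝ) ≤ r := by positivity
  set C : ℝ := ‖trCLM n‖ with hC
  have hC0 : (0 : ℝ) ≤ C := norm_nonneg _
  have key := hasDerivAt_tsum_of_isPreconnected
    (u := fun k : ℕ => (C * (‖B‖ * ‖B‖)) * ((k : ℝ) * ((k - 1 : ℕ) : ℝ) * r ^ (k - 2) / k !))
    (g := fun (k : ℕ) (z : ℝ) =>
      ((k ! : ℝ)⁻¹ * (k : ℝ)) * (((A + z • B) ^ (k - 1)) * B).trace)
    (g' := fun (k : ℕ) (z : ℝ) =>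
      ((k ! : ℝ)⁻¹ * (k : ℝ)) *
        ((∑ i ∈ Finset.range (k - 1),
            (A + z • B) ^ i * B * (A + z • B) ^ (k - 1 - 1 - i)) * B).trace)
    (((sum2 r).mul_left (C * (‖B‖ * ‖B‖)))) (Metric.isOpen_ball (x := (0:ℝ)) (ε := R))
    ((convex_ball (0:ℝ) R).isPreconnected)
    (fun k z _ => hasDerivAt_trpow' A B k z)
    (fun k z hz => ?_) (y₀ := t) ?_ ?_ (y := t) ?_
  · exact key
  · -- derivative bound
    rw [mem_ball_zero_iff, Real.norm_eq_abs] at hz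
    have hM : ‖A + z • B‖ ≤ r := norm_affine_le A B hz.le
    set S : Mat n := ∑ i ∈ Finset.range (k - 1),
      (A + z • B) ^ i * B * (A + z • B) ^ (k - 1 - 1 - i) with hS
    have hSnorm : ‖S‖ ≤ ((k - 1 : ℕ) : ℝ) * (r ^ (k - 2) * ‖B‖) := by
      rw [hS]
      refine (norm_sum_le _ _).trans ?_
      have hterm : ∀ i ∈ Finset.range (k - 1),
          ‖(A + z • B) ^ i * B * (A + z • B) ^ (k - 1 - 1 - i)‖ ≤ r ^ (k - 2) * ‖B‖ := by
        intro i hi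
        rw [Finset.mem_range] at hi
        calc ‖(A + z • B) ^ i * B * (A + z • B) ^ (k - 1 - 1 - i)‖
            ≤ ‖(A + z • B) ^ i * B‖ * ‖(A + z • B) ^ (k - 1 - 1 - i)‖ := norm_mul_le _ _
          _ ≤ (‖(A + z • B) ^ i‖ * ‖B‖) * ‖(A + z • B) ^ (k - 1 - 1 - i)‖ :=
              mul_le_mul_of_nonneg_right (norm_mul_le _ _) (norm_nonneg _)
          _ ≤ (r ^ i * ‖B‖) * r ^ (k - 1 - 1 - i) := by
              refine mul_le_mul (mul_le_mul_of_nonneg_right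
                ((norm_pow_le _ _).trans (pow_le_pow_left₀ (norm_nonneg _) hM _))
                (norm_nonneg _))
                ((norm_pow_le _ _).trans (pow_le_pow_left₀ (norm_nonneg _) hM _))
                (norm_nonneg _) (by positivity)
          _ = r ^ (k - 2) * ‖B‖ := by
              rw [mul_right_comm, ← pow_add]
              congr 2
              omega
      refine (Finset.sum_le_sum hterm).trans ?_
      rw [Finset.sum_const, Finset.card_range, nsmul_eq_mul]
    have h2 : |(S * B).trace| ≤ C * (((k - 1 : ℕ) : ℝ) * (r ^ (k - 2) * ‖B‖) * ‖B‖) := by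
      refine (tr_le _).trans ?_
      refine mul_le_mul_of_nonneg_left ?_ hC0
      exact (norm_mul_le _ _).trans (mul_le_mul_of_nonneg_right hSnorm (norm_nonneg _))
    show ‖((k ! : ℝ)⁻¹ * (k : ℝ)) * (S * B).trace‖
      ≤ (C * (‖B‖ * ‖B‖)) * ((k : ℝ) * ((k - 1 : ℕ) : ℝ) * r ^ (k - 2) / k !)
    rw [Real.norm_eq_abs, abs_mul]
    have h3 : |(k ! : ℝ)⁻¹ * (k : ℝ)| = (k : ℝ) / k ! := by
      rw [abs_mul, abs_inv, Nat.abs_cast, Nat.abs_cast, inv_mul_eq_div]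
    rw [h3]
    calc (k : ℝ) / k ! * |(S * B).trace|
        ≤ (k : ℝ) / k ! * (C * (((k - 1 : ℕ) : ℝ) * (r ^ (k - 2) * ‖B‖) * ‖B‖)) :=
          mul_le_mul_of_nonneg_left h2 (by positivity)
      _ = (C * (‖B‖ * ‖B‖)) * ((k : ℝ) * ((k - 1 : ℕ) : ℝ) * r ^ (k - 2) / k !) := by ring
  · rw [mem_ball_zero_iff, Real.norm_eq_abs]; exact lt_add_one _
  · -- summability at t
    refine Summable.of_norm_bounded
      (g := fun k => (C * ‖B‖) * ((k : ℝ) * ‖A + t • B‖ ^ (k - 1) / k !))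
      ((sum1 _).mul_left _) (fun k => ?_)
    show ‖((k ! : ℝ)⁻¹ * (k : ℝ)) * (((A + t • B) ^ (k - 1)) * B).trace‖
      ≤ (C * ‖B‖) * ((k : ℝ) * ‖A + t • B‖ ^ (k - 1) / k !)
    rw [Real.norm_eq_abs, abs_mul]
    have h3 : |(k ! : ℝ)⁻¹ * (k : ℝ)| = (k : ℝ) / k ! := by
      rw [abs_mul, abs_inv, Nat.abs_cast, Nat.abs_cast, inv_mul_eq_div]
    rw [h3]
    have h2 : |(((A + t • B) ^ (k - 1)) * B).trace| ≤ C * (‖A + t • B‖ ^ (k - 1) * ‖B‖) := by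
      refine (tr_le _).trans (mul_le_mul_of_nonneg_left ?_ hC0)
      exact (norm_mul_le _ _).trans (mul_le_mul_of_nonneg_right (norm_pow_le _ _) (norm_nonneg _))
    calc (k : ℝ) / k ! * |(((A + t • B) ^ (k - 1)) * B).trace|
        ≤ (k : ℝ) / k ! * (C * (‖A + t • B‖ ^ (k - 1) * ‖B‖)) :=
          mul_le_mul_of_nonneg_left h2 (by positivity)
      _ = (C * ‖B‖) * ((k : ℝ) * ‖A + t • B‖ ^ (k - 1) / k !) := by ring
  · rw [mem_ball_zero_iff, Real.norm_eq_abs]; exact lt_add_one _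

end Norms

section scalar

lemma exp_tsum (a : ℝ) : Real.exp a = ∑' (k : ℕ), a ^ k / k ! := by
  rw [Real.exp_eq_exp_ℝ, NormedSpace.exp_eq_tsum_div]

def Ssum (a b : ℝ) : ℝ :=
  ∑' (k : ℕ), ((k ! : ℝ)⁻¹ * (k : ℝ)) * ∑ i ∈ Finset.range (k - 1), a ^ i * b ^ (k - 1 - 1 - i)

lemma Ssum_term_bound (a b : ℝ) (k : ℕ) :
    |((k ! : ℝ)⁻¹ * (k : ℝ)) * ∑ i ∈ Finset.range (k - 1), a ^ i * b ^ (k - 1 - 1 - i)|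
      ≤ (k : ℝ) * ((k - 1 : ℕ) : ℝ) * (max |a| |b|) ^ (k - 2) / k ! := by
  set c := max |a| |b| with hc
  have hc0 : (0:ℝ) ≤ c := le_max_of_le_left (abs_nonneg _)
  have hsum : |∑ i ∈ Finset.range (k - 1), a ^ i * b ^ (k - 1 - 1 - i)|
      ≤ ((k - 1 : ℕ) : ℝ) * c ^ (k - 2) := by
    refine (Finset.abs_sum_le_sum_abs _ _).trans ?_
    have hterm : ∀ i ∈ Finset.range (k - 1),
        |a ^ i * b ^ (k - 1 - 1 - i)| ≤ c ^ (k - 2) := by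
      intro i hi
      rw [Finset.mem_range] at hi
      rw [abs_mul, abs_pow, abs_pow]
      calc |a| ^ i * |b| ^ (k - 1 - 1 - i) ≤ c ^ i * c ^ (k - 1 - 1 - i) :=
            mul_le_mul (pow_le_pow_left₀ (abs_nonneg _) (le_max_left _ _) _)
              (pow_le_pow_left₀ (abs_nonneg _) (le_max_right _ _) _) (by positivity)
              (by positivity)
        _ = c ^ (k - 2) := by rw [← pow_add]; congr 1; omega
    refine (Finset.sum_le_sum hterm).trans ?_
    rw [Finset.sum_const, Finset.card_range, nsmul_eq_mul]
  rw [abs_mul]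
  have h3 : |(k ! : ℝ)⁻¹ * (k : ℝ)| = (k : ℝ) / k ! := by
    rw [abs_mul, abs_inv, Nat.abs_cast, Nat.abs_cast, inv_mul_eq_div]
  rw [h3]
  calc (k : ℝ) / k ! * |∑ i ∈ Finset.range (k - 1), a ^ i * b ^ (k - 1 - 1 - i)|
      ≤ (k : ℝ) / k ! * (((k - 1 : ℕ) : ℝ) * c ^ (k - 2)) :=
        mul_le_mul_of_nonneg_left hsum (by positivity)
    _ = (k : ℝ) * ((k - 1 : ℕ) : ℝ) * c ^ (k - 2) / k ! := by ring

lemma Ssum_summable (a b : ℝ) :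
    Summable (fun k : ℕ =>
      ((k ! : ℝ)⁻¹ * (k : ℝ)) * ∑ i ∈ Finset.range (k - 1), a ^ i * b ^ (k - 1 - 1 - i)) := by
  refine Summable.of_norm_bounded (sum2 (max |a| |b|)) (fun k => ?_)
  rw [Real.norm_eq_abs]
  exact Ssum_term_bound a b k

lemma E_summable (a : ℝ) :
    Summable (fun k : ℕ => ((k ! : ℝ)⁻¹ * (k : ℝ)) * a ^ (k - 1)) := by
  refine Summable.of_norm_bounded (sum1 |a|) (fun k => ?_)
  rw [Real.norm_eq_abs, abs_mul, abs_pow]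
  have h3 : |(k ! : ℝ)⁻¹ * (k : ℝ)| = (k : ℝ) / k ! := by
    rw [abs_mul, abs_inv, Nat.abs_cast, Nat.abs_cast, inv_mul_eq_div]
  rw [h3]
  exact le_of_eq (by ring)

lemma E_eq (a : ℝ) :
    ∑' (k : ℕ), ((k ! : ℝ)⁻¹ * (k : ℝ)) * a ^ (k - 1) = Real.exp a := by
  have e : ∀ k : ℕ, ((((k+1))! : ℝ)⁻¹ * (((k+1) : ℕ) : ℝ)) * a ^ ((k+1) - 1) = a ^ k / k ! := by
    intro k
    have h : ((k + 1)! : ℝ) = ((k:ℝ) + 1) * k ! := by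
      rw [Nat.factorial_succ]; push_cast; ring
    rw [h]
    have hk : ((k : ℝ) + 1) ≠ 0 := by positivity
    push_cast
    field_simp
  calc ∑' (k : ℕ), ((k ! : ℝ)⁻¹ * (k : ℝ)) * a ^ (k - 1)
      = (((0:ℕ)! : ℝ)⁻¹ * ((0:ℕ) : ℝ)) * a ^ (0 - 1)
        + ∑' (k : ℕ), ((((k+1))! : ℝ)⁻¹ * (((k+1) : ℕ) : ℝ)) * a ^ ((k+1) - 1) :=
        Summable.tsum_eq_zero_add (E_summable a)
    _ = ∑' (k : ℕ), a ^ k / k ! := by rw [tsum_congr e]; simp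
    _ = Real.exp a := (exp_tsum a).symm

lemma Ssum_self (a : ℝ) : Ssum a a = Real.exp a := by
  have e : ∀ k : ℕ,
      ((k ! : ℝ)⁻¹ * (k : ℝ)) * ∑ i ∈ Finset.range (k - 1), a ^ i * a ^ (k - 1 - 1 - i)
      = ((k ! : ℝ)⁻¹ * (k : ℝ)) * (((k - 1 : ℕ) : ℝ) * a ^ (k - 2)) := by
    intro k
    congr 1
    have hterm : ∀ i ∈ Finset.range (k - 1), a ^ i * a ^ (k - 1 - 1 - i) = a ^ (k - 2) := by
      intro i hi
      rw [Finset.mem_range] at hi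
      rw [← pow_add]
      congr 1
      omega
    rw [Finset.sum_congr rfl hterm, Finset.sum_const, Finset.card_range, nsmul_eq_mul]
  have hs : Summable (fun k : ℕ =>
      ((k ! : ℝ)⁻¹ * (k : ℝ)) * (((k - 1 : ℕ) : ℝ) * a ^ (k - 2))) := by
    have := Ssum_summable a a
    rwa [funext e] at this
  have hs1 : Summable (fun k : ℕ =>
      (((k + 1)! : ℝ)⁻¹ * ((k + 1 : ℕ) : ℝ)) * (((k + 1 - 1 : ℕ) : ℝ) * a ^ (k + 1 - 2))) :=
    (summable_nat_add_iff 1).mpr hs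
  have e2 : ∀ k : ℕ,
      (((k + 2)! : ℝ)⁻¹ * ((k + 2 : ℕ) : ℝ)) * (((k + 2 - 1 : ℕ) : ℝ) * a ^ (k + 2 - 2))
      = a ^ k / k ! := by
    intro k
    have h : ((k + 2)! : ℝ) = ((k:ℝ) + 2) * (((k:ℝ) + 1) * k !) := by
      rw [show k + 2 = (k + 1) + 1 by ring, Nat.factorial_succ, Nat.factorial_succ]
      push_cast; ring
    have h1 : (k + 2 - 1 : ℕ) = k + 1 := by omega
    have h2 : (k + 2 - 2 : ℕ) = k := by omega
    rw [h, h1, h2]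
    have hk1 : ((k : ℝ) + 1) ≠ 0 := by positivity
    have hk2 : ((k : ℝ) + 2) ≠ 0 := by positivity
    push_cast
    field_simp
  calc Ssum a a
      = ∑' (k : ℕ), ((k ! : ℝ)⁻¹ * (k : ℝ)) * (((k - 1 : ℕ) : ℝ) * a ^ (k - 2)) :=
        tsum_congr e
    _ = (((0:ℕ)! : ℝ)⁻¹ * ((0:ℕ) : ℝ)) * (((0 - 1 : ℕ) : ℝ) * a ^ (0 - 2))
        + ∑' (k : ℕ), (((k + 1)! : ℝ)⁻¹ * ((k + 1 : ℕ) : ℝ))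
            * (((k + 1 - 1 : ℕ) : ℝ) * a ^ (k + 1 - 2)) := Summable.tsum_eq_zero_add hs
    _ = ∑' (k : ℕ), (((k + 1)! : ℝ)⁻¹ * ((k + 1 : ℕ) : ℝ))
            * (((k + 1 - 1 : ℕ) : ℝ) * a ^ (k + 1 - 2)) := by simp
    _ = (((0 + 1)! : ℝ)⁻¹ * ((0 + 1 : ℕ) : ℝ)) * (((0 + 1 - 1 : ℕ) : ℝ) * a ^ (0 + 1 - 2))
        + ∑' (k : ℕ), (((k + 2)! : ℝ)⁻¹ * ((k + 2 : ℕ) : ℝ))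
            * (((k + 2 - 1 : ℕ) : ℝ) * a ^ (k + 2 - 2)) := Summable.tsum_eq_zero_add hs1
    _ = ∑' (k : ℕ), a ^ k / k ! := by rw [tsum_congr e2]; simp
    _ = Real.exp a := (exp_tsum a).symm

lemma Ssum_ne {a b : ℝ} (hab : a ≠ b) :
    Ssum a b = (Real.exp a - Real.exp b) / (a - b) := by
  have hab' : a - b ≠ 0 := sub_ne_zero.mpr hab
  rw [eq_div_iff hab']
  have e : ∀ k : ℕ,
      (((k ! : ℝ)⁻¹ * (k : ℝ)) * ∑ i ∈ Finset.range (k - 1), a ^ i * b ^ (k - 1 - 1 - i))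
        * (a - b)
      = ((k ! : ℝ)⁻¹ * (k : ℝ)) * a ^ (k - 1)
        - ((k ! : ℝ)⁻¹ * (k : ℝ)) * b ^ (k - 1) := by
    intro k
    rw [mul_assoc, geom_sum₂_mul, mul_sub]
  calc Ssum a b * (a - b)
      = ∑' (k : ℕ),
          ((((k ! : ℝ)⁻¹ * (k : ℝ)) * ∑ i ∈ Finset.range (k - 1), a ^ i * b ^ (k - 1 - 1 - i))
            * (a - b)) := (tsum_mul_right).symm
    _ = ∑' (k : ℕ), (((k ! : ℝ)⁻¹ * (k : ℝ)) * a ^ (k - 1)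
          - ((k ! : ℝ)⁻¹ * (k : ℝ)) * b ^ (k - 1)) := tsum_congr e
    _ = Real.exp a - Real.exp b := by
        rw [Summable.tsum_sub (E_summable a) (E_summable b), E_eq, E_eq]

lemma key_ineq {x : ℝ} (hx : 0 ≤ x) : Real.exp x - 1 ≤ x * (Real.exp x + 1) / 2 := by
  set h : ℝ → ℝ := fun y => y * (Real.exp y + 1) / 2 - Real.exp y + 1 with hh
  have hderiv : ∀ y : ℝ, HasDerivAt h
      ((1 * (Real.exp y + 1) + y * Real.exp y) / 2 - Real.exp y) y := by
    intro y
    have h1 := ((hasDerivAt_id y).mul ((Real.hasDerivAt_exp y).add_const 1)).div_const 2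
    simpa [hh] using (h1.sub (Real.hasDerivAt_exp y)).add_const 1
  have hmono : MonotoneOn h (Set.Ici (0:ℝ)) := by
    refine monotoneOn_of_deriv_nonneg (convex_Ici 0)
      (fun y _ => ((hderiv y).differentiableAt).continuousAt.continuousWithinAt)
      (fun y _ => ((hderiv y).differentiableAt).differentiableWithinAt) (fun y hy => ?_)
    rw [interior_Ici] at hy
    rw [(hderiv y).deriv]
    have h3 : (1 - y) * Real.exp y ≤ 1 := by
      have h4 := Real.add_one_le_exp (-y)
      have h5 : Real.exp (-y) * Real.exp y = 1 := by
        rw [← Real.exp_add]; norm_num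
      nlinarith [Real.exp_pos y]
    nlinarith [h3]
  have h0 : h 0 = 0 := by simp [hh]
  have := hmono (Set.self_mem_Ici) hx hx
  rw [h0] at this
  simp only [hh] at this
  linarith

lemma slope_ineq {a b : ℝ} (hba : b < a) :
    Real.exp a - Real.exp b ≤ (a - b) * (Real.exp a + Real.exp b) / 2 := by
  have hx : (0:ℝ) ≤ a - b := by linarith
  have hk := key_ineq hx
  have hE : Real.exp b * Real.exp (a - b) = Real.exp a := by
    rw [← Real.exp_add]; ring_nf
  nlinarith [mul_le_mul_of_nonneg_left hk (Real.exp_pos b).le, Real.exp_pos b]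

lemma Ssum_le (a b : ℝ) : Ssum a b ≤ (Real.exp a + Real.exp b) / 2 := by
  rcases lt_trichotomy a b with h | h | h
  · rw [Ssum_ne h.ne]
    have : (Real.exp a - Real.exp b) / (a - b) = (Real.exp b - Real.exp a) / (b - a) := by
      rw [← neg_div_neg_eq]; ring_nf
    rw [this]
    rw [div_le_iff₀ (by linarith : (0:ℝ) < b - a)]
    have := slope_ineq h
    nlinarith [this]
  · subst h
    rw [Ssum_self]
    linarith
  · rw [Ssum_ne h.ne']
    rw [div_le_iff₀ (by linarith : (0:ℝ) < a - b)]
    have := slope_ineq h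
    nlinarith [this]

end scalar

section eval
variable {n : ℕ}

lemma tr_diag (w : Fin n → ℝ) (B : Mat n) (a b : ℕ) :
    ((Matrix.diagonal w) ^ a * B * (Matrix.diagonal w) ^ b * B).trace
      = ∑ p, ∑ q, (w p) ^ a * B p q * ((w q) ^ b * B q p) := by
  rw [Matrix.diagonal_pow, Matrix.diagonal_pow, Matrix.trace]
  refine Finset.sum_congr rfl fun p _ => ?_
  rw [Matrix.diag]
  rw [Matrix.mul_apply]
  refine Finset.sum_congr rfl fun q _ => ?_
  rw [Matrix.mul_diagonal, Matrix.diagonal_mul]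
  simp only [Pi.pow_apply]
  ring

lemma F2_diag_eval (w : Fin n → ℝ) (B : Mat n) :
    F2 (Matrix.diagonal w) B 0
      = ∑ p, ∑ q, (B p q * B q p) * Ssum (w p) (w q) := by
  have e : ∀ k : ℕ,
      ((k ! : ℝ)⁻¹ * (k : ℝ)) *
        ((∑ i ∈ Finset.range (k - 1),
            (Matrix.diagonal w + (0:ℝ) • B) ^ i * B *
              (Matrix.diagonal w + (0:ℝ) • B) ^ (k - 1 - 1 - i)) * B).trace
      = ∑ p, ∑ q, (B p q * B q p) *
          (((k ! : ℝ)⁻¹ * (k : ℝ)) *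
            ∑ i ∈ Finset.range (k - 1), (w p) ^ i * (w q) ^ (k - 1 - 1 - i)) := by
    intro k
    have hz : Matrix.diagonal w + (0:ℝ) • B = Matrix.diagonal w := by
      rw [zero_smul, add_zero]
    rw [hz, Finset.sum_mul, Matrix.trace_sum]
    have e1 : ∀ i ∈ Finset.range (k - 1),
        ((Matrix.diagonal w) ^ i * B * (Matrix.diagonal w) ^ (k - 1 - 1 - i) * B).trace
        = ∑ p, ∑ q, (w p) ^ i * B p q * ((w q) ^ (k - 1 - 1 - i) * B q p) :=
      fun i _ => tr_diag w B i (k - 1 - 1 - i)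
    rw [Finset.sum_congr rfl e1]
    rw [Finset.sum_comm]
    rw [Finset.mul_sum]
    refine Finset.sum_congr rfl fun p _ => ?_
    rw [Finset.sum_comm]
    rw [Finset.mul_sum]
    refine Finset.sum_congr rfl fun q _ => ?_
    rw [Finset.mul_sum, Finset.mul_sum]
    rw [Finset.mul_sum]
    refine Finset.sum_congr rfl fun i _ => ?_
    ring
  have hsummable : ∀ p q : Fin n, Summable (fun k : ℕ =>
      (B p q * B q p) *
        (((k ! : ℝ)⁻¹ * (k : ℝ)) *
          ∑ i ∈ Finset.range (k - 1), (w p) ^ i * (w q) ^ (k - 1 - 1 - i))) :=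
    fun p q => (Ssum_summable (w p) (w q)).mul_left _
  calc F2 (Matrix.diagonal w) B 0
      = ∑' (k : ℕ), ∑ p, ∑ q, (B p q * B q p) *
          (((k ! : ℝ)⁻¹ * (k : ℝ)) *
            ∑ i ∈ Finset.range (k - 1), (w p) ^ i * (w q) ^ (k - 1 - 1 - i)) := tsum_congr e
    _ = ∑ p, ∑' (k : ℕ), ∑ q, (B p q * B q p) *
          (((k ! : ℝ)⁻¹ * (k : ℝ)) *
            ∑ i ∈ Finset.range (k - 1), (w p) ^ i * (w q) ^ (k - 1 - 1 - i)) :=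
        Summable.tsum_finsetSum (fun p _ => summable_sum (fun q _ => hsummable p q))
    _ = ∑ p, ∑ q, ∑' (k : ℕ), (B p q * B q p) *
          (((k ! : ℝ)⁻¹ * (k : ℝ)) *
            ∑ i ∈ Finset.range (k - 1), (w p) ^ i * (w q) ^ (k - 1 - 1 - i)) :=
        Finset.sum_congr rfl fun p _ => Summable.tsum_finsetSum (fun q _ => hsummable p q)
    _ = ∑ p, ∑ q, (B p q * B q p) * Ssum (w p) (w q) := by
        refine Finset.sum_congr rfl fun p _ => Finset.sum_congr rfl fun q _ => ?_
        exact (tsum_mul_left (a := B p q * B q p)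
          (f := fun k : ℕ => ((k ! : ℝ)⁻¹ * (k : ℝ)) *
            ∑ i ∈ Finset.range (k - 1), (w p) ^ i * (w q) ^ (k - 1 - 1 - i)))

lemma tr_BB_diag (w : Fin n → ℝ) (B : Mat n) :
    (B * B * Matrix.diagonal (fun p => Real.exp (w p))).trace
      = ∑ p, ∑ q, (B p q * B q p) * Real.exp (w p) := by
  rw [Matrix.trace]
  refine Finset.sum_congr rfl fun p _ => ?_
  rw [Matrix.diag, Matrix.mul_diagonal, Matrix.mul_apply, Finset.sum_mul]

end eval

section spectral
variable {n : ℕ}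

lemma exp_diag_real (w : Fin n → ℝ) :
    NormedSpace.exp (Matrix.diagonal w) = Matrix.diagonal (fun p => Real.exp (w p)) := by
  rw [Matrix.exp_diagonal]
  congr 1
  rw [Pi.exp_def]
  funext p
  rw [← Real.exp_eq_exp_ℝ]

lemma trace_exp_pos [Nonempty (Fin n)] (X : Mat n) (hX : X.IsHermitian) :
    0 < (NormedSpace.exp X).trace := by
  set V : Mat n := (Matrix.IsHermitian.eigenvectorUnitary hX : Mat n) with hVdef
  have hV2 : V * star V = 1 :=
    (Matrix.mem_unitaryGroup_iff).mp (Matrix.IsHermitian.eigenvectorUnitary hX).2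
  have hV1 : star V * V = 1 :=
    (Matrix.mem_unitaryGroup_iff').mp (Matrix.IsHermitian.eigenvectorUnitary hX).2
  have hdiag : RCLike.ofReal ∘ hX.eigenvalues = hX.eigenvalues := by
    funext i
    exact congrFun RCLike.ofReal_real_eq_id _
  set u : (Mat n)ˣ := ⟨V, star V, hV2, hV1⟩ with hu
  have hspec : X = ↑u * Matrix.diagonal hX.eigenvalues * ↑u⁻¹ := by
    have := Matrix.IsHermitian.spectral_theorem hX
    rw [hdiag] at this
    exact this
  rw [hspec, Matrix.exp_units_conj, Matrix.trace_units_conj, exp_diag_real,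
    Matrix.trace_diagonal]
  exact Finset.sum_pos (fun p _ => Real.exp_pos _) Finset.univ_nonempty

end spectral

section mainbound
variable {n : ℕ}

lemma main_bound [Nonempty (Fin n)] (Y D : Mat n) (hY : Y.IsHermitian) (hD : D.IsSymm) :
    F2 Y D 0 ≤ (D * D * NormedSpace.exp Y).trace := by
  classical
  set V : Mat n := (Matrix.IsHermitian.eigenvectorUnitary hY : Mat n) with hVdef
  set w : Fin n → ℝ := hY.eigenvalues with hwdef
  have hV2 : V * star V = 1 :=
    (Matrix.mem_unitaryGroup_iff).mp (Matrix.IsHermitian.eigenvectorUnitary hY).2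
  have hV1 : star V * V = 1 :=
    (Matrix.mem_unitaryGroup_iff').mp (Matrix.IsHermitian.eigenvectorUnitary hY).2
  have hdiag : RCLike.ofReal ∘ hY.eigenvalues = hY.eigenvalues := by
    funext i
    exact congrFun RCLike.ofReal_real_eq_id _
  have hspec : Y = V * Matrix.diagonal w * star V := by
    have := Matrix.IsHermitian.spectral_theorem hY
    rw [hdiag] at this
    exact this
  set B : Mat n := star V * D * V with hB
  have hmul : ∀ X Z : Mat n,
      (V * X * star V) * (V * Z * star V) = V * (X * Z) * star V := by
    intro X Z
    calc (V * X * star V) * (V * Z * star V)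
        = V * X * (star V * V) * (Z * star V) := by noncomm_ring
      _ = V * (X * Z) * star V := by rw [hV1]; noncomm_ring
  have htr : ∀ X : Mat n, (V * X * star V).trace = X.trace := by
    intro X
    rw [Matrix.trace_mul_cycle, hV1, one_mul]
  have hD' : D = V * B * star V := by
    rw [hB]
    calc D = (V * star V) * D * (V * star V) := by rw [hV2, one_mul, mul_one]
      _ = V * (star V * D * V) * star V := by noncomm_ring
  have hpow : ∀ i : ℕ, Y ^ i = V * (Matrix.diagonal w) ^ i * star V := by
    intro i
    induction i with
    | zero => rw [pow_zero, pow_zero, mul_one, hV2]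
    | succ i ih =>
      rw [pow_succ, ih]
      conv_lhs => rw [hspec]
      rw [hmul, ← pow_succ]
  have hst : star V = Vᵀ := by
    rw [Matrix.star_eq_conjTranspose, Matrix.conjTranspose_eq_transpose_of_trivial]
  have hBs : Bᵀ = B := by
    rw [hB, Matrix.transpose_mul, Matrix.transpose_mul, hst, Matrix.transpose_transpose, hD]
    rw [← mul_assoc, ← hst]
  have hsym : ∀ p q, B q p = B p q := by
    intro p q
    have := congrFun (congrFun hBs p) q
    rwa [Matrix.transpose_apply] at this
  -- F2 at 0 equals the diagonal version
  have hF2 : F2 Y D 0 = F2 (Matrix.diagonal w) B 0 := by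
    refine tsum_congr fun k => ?_
    congr 1
    have hz1 : Y + (0:ℝ) • D = Y := by rw [zero_smul, add_zero]
    have hz2 : Matrix.diagonal w + (0:ℝ) • B = Matrix.diagonal w := by
      rw [zero_smul, add_zero]
    rw [hz1, hz2, Finset.sum_mul, Finset.sum_mul, Matrix.trace_sum, Matrix.trace_sum]
    refine Finset.sum_congr rfl fun i _ => ?_
    rw [hpow i, hpow (k - 1 - 1 - i)]
    conv_lhs => rw [hD']
    rw [hmul, hmul, hmul, htr]
  have hexpY : NormedSpace.exp Y
      = V * Matrix.diagonal (fun p => Real.exp (w p)) * star V := by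
    set u : (Mat n)ˣ := ⟨V, star V, hV2, hV1⟩ with hu
    have hYu : Y = ↑u * Matrix.diagonal w * ↑u⁻¹ := hspec
    rw [hYu, Matrix.exp_units_conj, exp_diag_real]
    rfl
  have hT : (D * D * NormedSpace.exp Y).trace
      = ∑ p, ∑ q, (B p q * B q p) * Real.exp (w p) := by
    rw [hexpY]
    conv_lhs => rw [hD']
    rw [hmul, hmul, htr, tr_BB_diag]
  rw [hF2, F2_diag_eval, hT]
  have h1 : ∀ p q : Fin n, (B p q * B q p) * Ssum (w p) (w q)
      ≤ (B p q * B q p) * ((Real.exp (w p) + Real.exp (w q)) / 2) := by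
    intro p q
    refine mul_le_mul_of_nonneg_left (Ssum_le _ _) ?_
    rw [hsym p q]
    exact mul_self_nonneg _
  refine le_trans (Finset.sum_le_sum fun p _ => Finset.sum_le_sum fun q _ => h1 p q) ?_
  -- symmetrization identity
  have hswap : ∑ p, ∑ q, (B p q * B q p) * Real.exp (w q)
      = ∑ p, ∑ q, (B p q * B q p) * Real.exp (w p) := by
    rw [Finset.sum_comm]
    exact Finset.sum_congr rfl fun p _ => Finset.sum_congr rfl fun q _ => by ring
  calc ∑ p, ∑ q, (B p q * B q p) * ((Real.exp (w p) + Real.exp (w q)) / 2)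
      = ∑ p, ∑ q, ((B p q * B q p) * Real.exp (w p) / 2
          + (B p q * B q p) * Real.exp (w q) / 2) :=
        Finset.sum_congr rfl fun p _ => Finset.sum_congr rfl fun q _ => by ring
    _ = (∑ p, ∑ q, (B p q * B q p) * Real.exp (w p)) / 2
        + (∑ p, ∑ q, (B p q * B q p) * Real.exp (w q)) / 2 := by
        simp only [Finset.sum_add_distrib, ← Finset.sum_div]
    _ ≤ ∑ p, ∑ q, (B p q * B q p) * Real.exp (w p) := by
        rw [hswap]
        exact le_of_eq (by ring)

end mainbound

end Aux

/-- Second-order bound for the matrix softmax: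
`φ(t) = log tr e^{Y+tD}` is twice differentiable and `φ''(0) ≤ ⟨D², P^{mw}(Y)⟩`. -/
theorem stmt10 (n : ℕ) (Y D : Matrix (Fin n) (Fin n) ℝ) (hY : Y.IsSymm) (hD : D.IsSymm) :
    (∀ t : ℝ, DifferentiableAt ℝ (fun s : ℝ => Real.log ((mexp (Y + s • D)).trace)) t) ∧
      (∀ t : ℝ, DifferentiableAt ℝ
        (deriv fun s : ℝ => Real.log ((mexp (Y + s • D)).trace)) t) ∧
      deriv (deriv fun s : ℝ => Real.log ((mexp (Y + s • D)).trace)) 0 ≤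
        minner (D * D) (Pmw Y) := by
  rcases Nat.eq_zero_or_pos n with hn | hn
  · subst hn
    have htr : ∀ X : Mat 0, X.trace = 0 := fun X => by simp [Matrix.trace]
    have hphi : (fun s : ℝ => Real.log ((mexp (Y + s • D)).trace))
        = fun _ : ℝ => Real.log 0 := by
      funext s; rw [htr]
    refine ⟨?_, ?_, ?_⟩
    · intro t; rw [hphi]; exact differentiableAt_const _
    · intro t; rw [hphi, deriv_const']; exact differentiableAt_const _
    · rw [hphi, deriv_const']
      have h0 : deriv (fun _ : ℝ => (0:ℝ)) 0 = 0 := by simp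
      rw [h0]
      have hm : minner (D * D) (Pmw Y) = 0 := htr _
      rw [hm]
  · haveI : Nonempty (Fin n) := ⟨⟨0, hn⟩⟩
    have hYh : Y.IsHermitian := by
      rw [Matrix.IsHermitian, Matrix.conjTranspose_eq_transpose_of_trivial]
      exact hY
    have hsymm : ∀ s : ℝ, (Y + s • D).IsHermitian := by
      intro s
      rw [Matrix.IsHermitian, Matrix.conjTranspose_eq_transpose_of_trivial,
        Matrix.transpose_add, Matrix.transpose_smul, hY, hD]
    have hpos : ∀ s : ℝ, 0 < Fm Y D s := fun s => trace_exp_pos _ (hsymm s)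
    have hd : (deriv fun s : ℝ => Real.log ((mexp (Y + s • D)).trace))
        = fun s => F1 Y D s / Fm Y D s :=
      funext fun s => ((hasDerivAt_Fm Y D s).log (hpos s).ne').deriv
    refine ⟨?_, ?_, ?_⟩
    · intro t
      exact ((hasDerivAt_Fm Y D t).differentiableAt).log (hpos t).ne'
    · intro t
      rw [hd]
      exact ((hasDerivAt_F1 Y D t).differentiableAt).div
        ((hasDerivAt_Fm Y D t).differentiableAt) (hpos t).ne'
    · rw [hd]
      have hq := (hasDerivAt_F1 Y D 0).div (hasDerivAt_Fm Y D 0) (hpos 0).ne'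
      rw [show (fun s => F1 Y D s / Fm Y D s) = F1 Y D / Fm Y D from rfl, hq.deriv]
      have hF0 : Fm Y D 0 = (NormedSpace.exp Y).trace := by
        show (NormedSpace.exp (Y + (0:ℝ) • D)).trace = _
        rw [zero_smul, add_zero]
      have hP : 0 < (NormedSpace.exp Y).trace := hF0 ▸ hpos 0
      have hBnd := main_bound Y D hYh hD
      have hmin : minner (D * D) (Pmw Y)
          = (D * D * NormedSpace.exp Y).trace / (NormedSpace.exp Y).trace := by
        show ((D * D)ᵀ * (((mexp Y).trace)⁻¹ • mexp Y)).trace = _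
        rw [Matrix.transpose_mul, hD, Matrix.mul_smul, Matrix.trace_smul, smul_eq_mul,
          div_eq_inv_mul]
        rfl
      rw [hmin, hF0]
      have hstep : (F2 Y D 0 * (NormedSpace.exp Y).trace - F1 Y D 0 * F1 Y D 0)
            / (NormedSpace.exp Y).trace ^ 2
          ≤ F2 Y D 0 / (NormedSpace.exp Y).trace := by
        rw [div_le_div_iff₀ (by positivity) hP]
        nlinarith [mul_nonneg (mul_self_nonneg (F1 Y D 0)) hP.le]
      exact hstep.trans ((div_le_div_iff_of_pos_right hP).mpr hBnd)
end
end

section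
/- Let r ≥ 0 and define f(x) = sinh(x)/(cosh(x) + r). Then for all real δ, ρ with δ ≠ 0, δ + ρ ≠ 0, and δ − ρ ≠ 0, the following inequality holds: f(δ+ρ)/δ + f(δ−ρ)/δ ≤ (1 + |ρ|·tanh(|δ|)/|δ|) · ( f(δ+ρ)/(δ+ρ) + f(δ−ρ)/(δ−ρ) ). -/
open MeasureTheory Matrix

noncomputable section

private lemma aux_slope {u v : ℝ} (hu : 0 < u) (huv : u ≤ v) :
    u * (1 - Real.exp (-v)) ≤ v * (1 - Real.exp (-u)) := by
  have h1 : Real.exp (-u) * (u - v + 1) ≤ Real.exp (-v) := by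
    calc Real.exp (-u) * (u - v + 1) ≤ Real.exp (-u) * Real.exp (u - v) :=
          mul_le_mul_of_nonneg_left (Real.add_one_le_exp (u - v)) (Real.exp_nonneg _)
      _ = Real.exp (-v) := by rw [← Real.exp_add]; ring_nf
  have h2 : Real.exp (-u) * (1 + u) ≤ 1 := by
    calc Real.exp (-u) * (1 + u) ≤ Real.exp (-u) * Real.exp u :=
          mul_le_mul_of_nonneg_left (by linarith [Real.add_one_le_exp u]) (Real.exp_nonneg _)
      _ = 1 := by rw [← Real.exp_add]; simp
  nlinarith [mul_nonneg (sub_nonneg.2 huv) (sub_nonneg.2 h2),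
    mul_le_mul_of_nonneg_left h1 hu.le, Real.exp_pos (-u)]

private lemma h_anti (r : ℝ) (hr : 0 ≤ r) {y x : ℝ} (hy : 0 < y) (hyx : y ≤ x) :
    Real.sinh x * Real.exp (-x) / ((Real.cosh x + r) * x) ≤
      Real.sinh y * Real.exp (-y) / ((Real.cosh y + r) * y) := by
  have hx : 0 < x := lt_of_lt_of_le hy hyx
  have key : ∀ t : ℝ, Real.sinh t * Real.exp (-t) = (1 - Real.exp (-(2 * t))) / 2 := by
    intro t
    have e1 : Real.exp t * Real.exp (-t) = 1 := by rw [← Real.exp_add]; simp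
    have e2 : Real.exp (-t) * Real.exp (-t) = Real.exp (-(2 * t)) := by
      rw [← Real.exp_add]; ring_nf
    rw [Real.sinh_eq, div_mul_eq_mul_div, sub_mul, e1, e2]
  have hsx := key x
  have hsy := key y
  have hcx : 0 < Real.cosh x + r := by linarith [Real.cosh_pos (x := x)]
  have hcy : 0 < Real.cosh y + r := by linarith [Real.cosh_pos (x := y)]
  have hcle : Real.cosh y ≤ Real.cosh x := by
    rw [Real.cosh_le_cosh, abs_of_pos hy, abs_of_pos hx]; exact hyx
  have hs := aux_slope (u := 2 * y) (v := 2 * x) (by linarith) (by linarith)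
  have hey : Real.exp (-(2 * y)) ≤ 1 := Real.exp_le_one_iff.2 (by linarith)
  rw [hsx, hsy, div_le_div_iff₀ (by positivity) (by positivity)]
  nlinarith [mul_le_mul_of_nonneg_right hs hcy.le,
    mul_le_mul_of_nonneg_left hcle (by nlinarith : (0:ℝ) ≤ 2 * x * (1 - Real.exp (-(2*y))))]

private lemma key_ineq_s13 (r : ℝ) (hr : 0 ≤ r) {δ ρ : ℝ} (hδ : 0 < δ) (hρ : 0 < ρ)
    (hb : δ - ρ ≠ 0) :
    Real.sinh (δ + ρ) / ((Real.cosh (δ + ρ) + r) * (δ + ρ)) * (1 - Real.tanh δ) ≤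
      Real.sinh (δ - ρ) / ((Real.cosh (δ - ρ) + r) * (δ - ρ)) * (1 + Real.tanh δ) := by
  set a := δ + ρ with ha'
  set b := δ - ρ with hb'
  have ha : 0 < a := by rw [ha']; linarith
  have hc : 0 < |b| := abs_pos.2 hb
  have hba : |b| ≤ a := abs_le.2 ⟨by rw [hb', ha']; linarith, by rw [hb', ha']; linarith⟩
  have heven : Real.sinh b / ((Real.cosh b + r) * b)
      = Real.sinh |b| / ((Real.cosh |b| + r) * |b|) := by
    rcases abs_choice b with h | h
    · rw [h]
    · rw [h, Real.sinh_neg, Real.cosh_neg, mul_neg, neg_div_neg_eq]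
  rw [heven]
  have hcosh : 0 < Real.cosh δ := Real.cosh_pos δ
  have h1t : 1 - Real.tanh δ = Real.exp (-δ) / Real.cosh δ := by
    rw [Real.tanh_eq_sinh_div_cosh, ← Real.cosh_sub_sinh]
    field_simp
  have h2t : 1 + Real.tanh δ = Real.exp δ / Real.cosh δ := by
    rw [Real.tanh_eq_sinh_div_cosh, ← Real.cosh_add_sinh]
    field_simp
  have hB : 0 ≤ Real.sinh |b| / ((Real.cosh |b| + r) * |b|) := by
    apply div_nonneg (Real.sinh_nonneg_iff.2 hc.le)
    have := Real.cosh_pos (x := |b|)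
    positivity
  have hh := h_anti r hr hc hba
  rw [mul_div_right_comm, mul_div_right_comm] at hh
  have hmain : Real.sinh a / ((Real.cosh a + r) * a) * Real.exp (-δ) ≤
      Real.sinh |b| / ((Real.cosh |b| + r) * |b|) * Real.exp δ := by
    have e1 : -a + ρ = -δ := by rw [ha']; ring
    have e2 : -|b| + ρ ≤ δ := by
      have := neg_abs_le b
      rw [hb'] at this ⊢
      linarith
    calc Real.sinh a / ((Real.cosh a + r) * a) * Real.exp (-δ)
        = Real.sinh a / ((Real.cosh a + r) * a) * Real.exp (-a) * Real.exp ρ := by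
          rw [mul_assoc, ← Real.exp_add, e1]
      _ ≤ Real.sinh |b| / ((Real.cosh |b| + r) * |b|) * Real.exp (-|b|) * Real.exp ρ :=
          mul_le_mul_of_nonneg_right hh (Real.exp_nonneg _)
      _ = Real.sinh |b| / ((Real.cosh |b| + r) * |b|) * Real.exp (-|b| + ρ) := by
          rw [mul_assoc, ← Real.exp_add]
      _ ≤ Real.sinh |b| / ((Real.cosh |b| + r) * |b|) * Real.exp δ :=
          mul_le_mul_of_nonneg_left (Real.exp_le_exp.2 e2) hB
  rw [h1t, h2t, ← mul_div_assoc, ← mul_div_assoc, div_le_div_iff₀ hcosh hcosh]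
  exact mul_le_mul_of_nonneg_right hmain hcosh.le

private lemma main_pos (r : ℝ) (hr : 0 ≤ r) {δ ρ : ℝ} (hδ : 0 < δ) (hρ : 0 ≤ ρ)
    (h2 : δ - ρ ≠ 0) :
    Real.sinh (δ + ρ) / (Real.cosh (δ + ρ) + r) / δ +
      Real.sinh (δ - ρ) / (Real.cosh (δ - ρ) + r) / δ ≤
    (1 + ρ * Real.tanh δ / δ) *
      (Real.sinh (δ + ρ) / (Real.cosh (δ + ρ) + r) / (δ + ρ) +
        Real.sinh (δ - ρ) / (Real.cosh (δ - ρ) + r) / (δ - ρ)) := by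
  rcases hρ.eq_or_lt with rfl | hρ'
  · simp
  · have ha : (0:ℝ) < δ + ρ := by linarith
    have hk := key_ineq_s13 r hr hδ hρ' h2
    rw [← div_div, ← div_div] at hk
    set A := Real.sinh (δ + ρ) / (Real.cosh (δ + ρ) + r) / (δ + ρ) with hA
    set B := Real.sinh (δ - ρ) / (Real.cosh (δ - ρ) + r) / (δ - ρ) with hB
    have eA : Real.sinh (δ + ρ) / (Real.cosh (δ + ρ) + r) = A * (δ + ρ) :=
      (div_mul_cancel₀ _ ha.ne').symm
    have eB : Real.sinh (δ - ρ) / (Real.cosh (δ - ρ) + r) = B * (δ - ρ) :=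
      (div_mul_cancel₀ _ h2).symm
    rw [eA, eB, ← add_div, div_le_iff₀ hδ]
    have expand : (1 + ρ * Real.tanh δ / δ) * (A + B) * δ
        = (δ + ρ * Real.tanh δ) * (A + B) := by
      field_simp
    rw [expand]
    nlinarith [mul_le_mul_of_nonneg_left hk hρ'.le]

private lemma main_pos2 (r : ℝ) (hr : 0 ≤ r) {δ ρ : ℝ} (hδ : 0 < δ) (h1 : δ + ρ ≠ 0)
    (h2 : δ - ρ ≠ 0) :
    Real.sinh (δ + ρ) / (Real.cosh (δ + ρ) + r) / δ +
      Real.sinh (δ - ρ) / (Real.cosh (δ - ρ) + r) / δ ≤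
    (1 + |ρ| * Real.tanh |δ| / |δ|) *
      (Real.sinh (δ + ρ) / (Real.cosh (δ + ρ) + r) / (δ + ρ) +
        Real.sinh (δ - ρ) / (Real.cosh (δ - ρ) + r) / (δ - ρ)) := by
  rw [abs_of_pos hδ]
  rcases le_or_gt 0 ρ with hρ | hρ
  · rw [abs_of_nonneg hρ]
    exact main_pos r hr hδ hρ h2
  · rw [abs_of_neg hρ]
    have h := main_pos r hr (ρ := -ρ) hδ (by linarith) (by rw [sub_neg_eq_add]; exact h1)
    rw [sub_neg_eq_add, ← sub_eq_add_neg] at h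
    linarith

private lemma stmt13_aux (r : ℝ) (hr : 0 ≤ r) (δ ρ : ℝ) (hδ : δ ≠ 0) (h1 : δ + ρ ≠ 0) (h2 : δ - ρ ≠ 0) :
    Real.sinh (δ + ρ) / (Real.cosh (δ + ρ) + r) / δ +
      Real.sinh (δ - ρ) / (Real.cosh (δ - ρ) + r) / δ ≤
    (1 + |ρ| * Real.tanh |δ| / |δ|) *
      (Real.sinh (δ + ρ) / (Real.cosh (δ + ρ) + r) / (δ + ρ) +
        Real.sinh (δ - ρ) / (Real.cosh (δ - ρ) + r) / (δ - ρ)) := by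
  rcases hδ.lt_or_gt with hneg | hpos
  · have h := main_pos2 r hr (δ := -δ) (ρ := -ρ) (by linarith)
      (by intro h; exact h1 (by linarith))
      (by intro h; exact h2 (by linarith))
    rw [← neg_add] at h
    have e : -δ - -ρ = -(δ - ρ) := by ring
    rw [e] at h
    simp only [Real.sinh_neg, Real.cosh_neg, abs_neg, neg_div, div_neg, neg_neg] at h
    linarith
  · exact main_pos2 r hr hpos h1 h2

/-- The pointwise hyperbolic inequality underlying the
symmetrized entrywise Hessian bound. -/
theorem stmt13 (r : ℝ) (hr : 0 ≤ r) (δ ρ : ℝ) (hδ : δ ≠ 0) (h1 : δ + ρ ≠ 0) (h2 : δ - ρ ≠ 0) :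
    Real.sinh (δ + ρ) / (Real.cosh (δ + ρ) + r) / δ +
      Real.sinh (δ - ρ) / (Real.cosh (δ - ρ) + r) / δ ≤
    (1 + |ρ| * Real.tanh |δ| / |δ|) *
      (Real.sinh (δ + ρ) / (Real.cosh (δ + ρ) + r) / (δ + ρ) +
        Real.sinh (δ - ρ) / (Real.cosh (δ - ρ) + r) / (δ - ρ)) := by
  exact stmt13_aux r hr δ ρ hδ h1 h2
end
end

section
/- Let δ > 0 and r ≥ 0, and define b(x) = sinh(x) / ( x·(cosh(x) + r·cosh(x − δ)) ) for x ≠ 0. Then b is strictly decreasing on the interval (2δ, ∞) and strictly increasing on the interval (−∞, 0). -/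
open MeasureTheory Matrix

noncomputable section

/-- Piecewise monotonicity of
`b(x) = sinh x / (x (cosh x + r cosh (x − δ)))`. -/
theorem stmt14 (δ r : ℝ) (hδ : 0 < δ) (hr : 0 ≤ r) :
    StrictAntiOn (fun x : ℝ => Real.sinh x / (x * (Real.cosh x + r * Real.cosh (x - δ))))
        (Set.Ioi (2 * δ)) ∧
      StrictMonoOn (fun x : ℝ => Real.sinh x / (x * (Real.cosh x + r * Real.cosh (x - δ))))
        (Set.Iio 0) := by
  set f : ℝ → ℝ := fun x => Real.sinh x / (x * (Real.cosh x + r * Real.cosh (x - δ))) with hf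
  have hC : ∀ x : ℝ, 0 < Real.cosh x + r * Real.cosh (x - δ) := fun x =>
    add_pos_of_pos_of_nonneg (Real.cosh_pos x) (mul_nonneg hr (Real.cosh_pos _).le)
  have hDne : ∀ x : ℝ, x ≠ 0 → x * (Real.cosh x + r * Real.cosh (x - δ)) ≠ 0 := fun x hx =>
    mul_ne_zero hx (hC x).ne'
  -- derivative
  have hderiv : ∀ x : ℝ, x ≠ 0 → HasDerivAt f
      ((Real.cosh x * (x * (Real.cosh x + r * Real.cosh (x - δ))) -
        Real.sinh x * ((Real.cosh x + r * Real.cosh (x - δ)) +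
          x * (Real.sinh x + r * Real.sinh (x - δ)))) /
        (x * (Real.cosh x + r * Real.cosh (x - δ))) ^ 2) x := by
    intro x hx
    have h1 : HasDerivAt (fun y : ℝ => Real.cosh (y - δ)) (Real.sinh (x - δ)) x := by
      simpa [Function.comp_def] using (Real.hasDerivAt_cosh (x - δ)).comp x ((hasDerivAt_id x).sub_const δ)
    have h2 : HasDerivAt (fun y : ℝ => Real.cosh y + r * Real.cosh (y - δ))
        (Real.sinh x + r * Real.sinh (x - δ)) x :=
      (Real.hasDerivAt_cosh x).add (h1.const_mul r)
    have h3 : HasDerivAt (fun y : ℝ => y * (Real.cosh y + r * Real.cosh (y - δ)))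
        ((Real.cosh x + r * Real.cosh (x - δ)) + x * (Real.sinh x + r * Real.sinh (x - δ))) x := by
      simpa [Pi.mul_def] using (hasDerivAt_id x).mul h2
    exact (Real.hasDerivAt_sinh x).div h3 (hDne x hx)
  -- sign of numerator
  have hnum : ∀ x : ℝ,
      Real.cosh x * (x * (Real.cosh x + r * Real.cosh (x - δ))) -
        Real.sinh x * ((Real.cosh x + r * Real.cosh (x - δ)) +
          x * (Real.sinh x + r * Real.sinh (x - δ)))
      = (x - Real.sinh x * Real.cosh x) +
        r * (x * Real.cosh δ - Real.sinh x * Real.cosh (x - δ)) := by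
    intro x
    have hpyth : Real.cosh x ^ 2 - Real.sinh x ^ 2 = 1 := Real.cosh_sq_sub_sinh_sq x
    have hadd : Real.cosh x * Real.cosh (x - δ) - Real.sinh x * Real.sinh (x - δ)
        = Real.cosh δ := by
      rw [← Real.cosh_sub]; ring_nf
    linear_combination x * hpyth + (r * x) * hadd
  constructor
  · apply strictAntiOn_of_deriv_neg (convex_Ioi _)
    · exact fun x hx => ((hderiv x (by
        have : (0:ℝ) < x := lt_trans (by linarith) hx
        exact this.ne')).continuousAt).continuousWithinAt
    · intro x hx
      rw [interior_Ioi] at hx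
      have hx' : 2 * δ < x := hx
      have hxpos : (0:ℝ) < x := lt_trans (by linarith) hx
      rw [(hderiv x hxpos.ne').deriv]
      apply div_neg_of_neg_of_pos _ (by positivity)
      rw [hnum x]
      have hs : x < Real.sinh x := Real.self_lt_sinh_iff.mpr hxpos
      have hc : 1 ≤ Real.cosh x := Real.one_le_cosh x
      have hcc : Real.cosh δ < Real.cosh (x - δ) := by
        rw [Real.cosh_lt_cosh]
        rw [abs_of_pos hδ, abs_of_pos (by linarith : (0:ℝ) < x - δ)]
        linarith
      have t1 : x - Real.sinh x * Real.cosh x < 0 := by nlinarith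
      have t2 : x * Real.cosh δ - Real.sinh x * Real.cosh (x - δ) < 0 := by
        nlinarith [Real.cosh_pos (x := x - δ), Real.cosh_pos (x := δ)]
      nlinarith [mul_nonpos_of_nonneg_of_nonpos hr t2.le]
  · apply strictMonoOn_of_deriv_pos (convex_Iio _)
    · exact fun x hx => ((hderiv x (ne_of_lt hx)).continuousAt).continuousWithinAt
    · intro x hx
      rw [interior_Iio] at hx
      have hx' : x < 0 := hx
      rw [(hderiv x hx.ne).deriv]
      apply div_pos _ (pow_pos (abs_pos.mpr (hDne x hx'.ne)) 2 |>.trans_eq (by rw [sq_abs]))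
      rw [hnum x]
      have hs : Real.sinh x < x := by
        have := Real.self_lt_sinh_iff.mpr (neg_pos.mpr hx)
        rw [Real.sinh_neg] at this; linarith
      have hc : 1 ≤ Real.cosh x := Real.one_le_cosh x
      have hcc : Real.cosh δ < Real.cosh (x - δ) := by
        rw [Real.cosh_lt_cosh]
        rw [abs_of_pos hδ, abs_of_neg (by linarith : x - δ < 0)]
        linarith
      have hsneg : Real.sinh x < 0 := by linarith
      have t1 : 0 < x - Real.sinh x * Real.cosh x := by
        nlinarith [mul_nonpos_of_nonpos_of_nonneg hsneg.le (by linarith : (0:ℝ) ≤ Real.cosh x - 1)]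
      have t2 : 0 < x * Real.cosh δ - Real.sinh x * Real.cosh (x - δ) := by
        have := mul_lt_mul (by linarith : -x < -Real.sinh x) hcc.le (Real.cosh_pos δ)
          (by linarith : (0:ℝ) ≤ -Real.sinh x)
        nlinarith
      nlinarith [mul_nonneg hr t2.le]
end
end

section
/- Let z be a real random variable supported on (0,1) with probability density (1/π)·x^{−1/2}·(1−x)^{−1/2} (the Beta(1/2,1/2) distribution). Then for every ℓ ≥ 0: (2/π)·e^{−ℓ/2}/√(1+e^{−ℓ}) ≤ P( log((1−z)/z) ≥ ℓ ) ≤ (2/π)·e^{−ℓ/2}. -/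
open MeasureTheory Matrix

noncomputable section

/-- Two-sided tail bound for the logit of a `Beta(1/2,1/2)`
random variable, written via the defining integral
`P(log((1−z)/z) ≥ ℓ) = (1/π) ∫_0^{1/(1+e^ℓ)} x^{-1/2} (1−x)^{-1/2} dx`. -/
theorem stmt15 (ℓ : ℝ) (hℓ : 0 ≤ ℓ) :
    2 / Real.pi * Real.exp (-ℓ / 2) / Real.sqrt (1 + Real.exp (-ℓ)) ≤
      (∫ x in (0 : ℝ)..(1 / (1 + Real.exp ℓ)),
        1 / Real.pi * x ^ (-(1 : ℝ) / 2) * (1 - x) ^ (-(1 : ℝ) / 2)) ∧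
    (∫ x in (0 : ℝ)..(1 / (1 + Real.exp ℓ)),
        1 / Real.pi * x ^ (-(1 : ℝ) / 2) * (1 - x) ^ (-(1 : ℝ) / 2)) ≤
      2 / Real.pi * Real.exp (-ℓ / 2) := by
  have hE1 : 1 ≤ Real.exp ℓ := Real.one_le_exp hℓ
  have hE0 : (0:ℝ) < Real.exp ℓ := Real.exp_pos ℓ
  set E := Real.exp ℓ with hE
  set t : ℝ := 1 / (1 + E) with ht
  have ht0 : 0 < t := by positivity
  have ht1 : t < 1 := by
    rw [ht, div_lt_one (by positivity)]; linarith
  have h1t : 0 < 1 - t := by linarith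
  have h1E : (1 + E) ≠ 0 := by positivity
  have hpi : (0:ℝ) < Real.pi := Real.pi_pos
  -- the base integral
  have hbase : ∀ c : ℝ, (∫ x in (0:ℝ)..t, c * x ^ (-(1:ℝ)/2)) = c * (2 * Real.sqrt t) := by
    intro c
    rw [intervalIntegral.integral_const_mul, integral_rpow (Or.inl (by norm_num))]
    rw [Real.sqrt_eq_rpow]
    norm_num
    left; ring
  have hint_r : ∀ c : ℝ, IntervalIntegrable (fun x => c * x ^ (-(1:ℝ)/2)) MeasureTheory.volume 0 t :=
    fun c => (intervalIntegral.intervalIntegrable_rpow' (by norm_num)).const_mul c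
  set C : ℝ := 1 / Real.pi * (1 - t) ^ (-(1:ℝ)/2) with hC
  -- pointwise bounds on [0, t]
  have hlow : ∀ x ∈ Set.Icc (0:ℝ) t,
      1 / Real.pi * x ^ (-(1:ℝ)/2) ≤ 1 / Real.pi * x ^ (-(1:ℝ)/2) * (1 - x) ^ (-(1:ℝ)/2) := by
    intro x hx
    have h1x : 0 < 1 - x := by nlinarith [hx.2]
    have h1 : (1:ℝ) ≤ (1 - x) ^ (-(1:ℝ)/2) :=
      Real.one_le_rpow_of_pos_of_le_one_of_nonpos h1x (by nlinarith [hx.1]) (by norm_num)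
    have ha : 0 ≤ 1 / Real.pi * x ^ (-(1:ℝ)/2) :=
      mul_nonneg (by positivity) (Real.rpow_nonneg hx.1 _)
    exact le_mul_of_one_le_right ha h1
  have hhigh : ∀ x ∈ Set.Icc (0:ℝ) t,
      1 / Real.pi * x ^ (-(1:ℝ)/2) * (1 - x) ^ (-(1:ℝ)/2) ≤ C * x ^ (-(1:ℝ)/2) := by
    intro x hx
    have h1x : 0 < 1 - x := by nlinarith [hx.2]
    have h1 : (1 - x) ^ (-(1:ℝ)/2) ≤ (1 - t) ^ (-(1:ℝ)/2) :=
      Real.rpow_le_rpow_of_nonpos h1t (by linarith [hx.2]) (by norm_num)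
    have hx0 := Real.rpow_nonneg hx.1 (-(1:ℝ)/2)
    calc 1 / Real.pi * x ^ (-(1:ℝ)/2) * (1 - x) ^ (-(1:ℝ)/2)
        ≤ 1 / Real.pi * x ^ (-(1:ℝ)/2) * (1 - t) ^ (-(1:ℝ)/2) := by
          apply mul_le_mul_of_nonneg_left h1
          exact mul_nonneg (by positivity) hx0
      _ = C * x ^ (-(1:ℝ)/2) := by rw [hC]; ring
  -- integrability of the middle integrand
  have hmeas : MeasureTheory.AEStronglyMeasurable
      (fun x : ℝ => 1 / Real.pi * x ^ (-(1:ℝ)/2) * (1 - x) ^ (-(1:ℝ)/2))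
      (MeasureTheory.volume.restrict (Set.uIoc (0:ℝ) t)) := by
    apply Measurable.aestronglyMeasurable
    fun_prop
  have hint : IntervalIntegrable
      (fun x : ℝ => 1 / Real.pi * x ^ (-(1:ℝ)/2) * (1 - x) ^ (-(1:ℝ)/2))
      MeasureTheory.volume 0 t := by
    apply (hint_r C).mono_fun hmeas
    filter_upwards [MeasureTheory.ae_restrict_mem measurableSet_uIoc] with x hx
    rw [Set.uIoc_of_le ht0.le] at hx
    have hxb := hhigh x ⟨hx.1.le, hx.2⟩
    have h1x : 0 < 1 - x := by nlinarith [hx.2]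
    have hg0 : 0 ≤ 1 / Real.pi * x ^ (-(1:ℝ)/2) * (1 - x) ^ (-(1:ℝ)/2) :=
      mul_nonneg (mul_nonneg (by positivity) (Real.rpow_nonneg hx.1.le _))
        (Real.rpow_nonneg h1x.le _)
    rw [Real.norm_eq_abs, Real.norm_eq_abs, abs_of_nonneg hg0, abs_of_nonneg]
    · exact hxb
    · exact le_trans hg0 hxb
  have hrt : ((1 - t) ^ (-(1:ℝ)/2) : ℝ) = (Real.sqrt (1-t))⁻¹ := by
    rw [show (-(1:ℝ)/2) = -(1/2) by ring, Real.rpow_neg h1t.le, ← Real.sqrt_eq_rpow]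
  constructor
  · calc 2 / Real.pi * Real.exp (-ℓ / 2) / Real.sqrt (1 + Real.exp (-ℓ))
        = 1 / Real.pi * (2 * Real.sqrt t) := by
          rw [show (-ℓ/2 : ℝ) = (-ℓ)/2 by ring, Real.exp_half, mul_div_assoc,
            ← Real.sqrt_div (Real.exp_nonneg _),
            show Real.exp (-ℓ) / (1 + Real.exp (-ℓ)) = t by
              rw [ht, Real.exp_neg, hE]; field_simp; ring]
          ring
      _ = ∫ x in (0:ℝ)..t, 1 / Real.pi * x ^ (-(1:ℝ)/2) := (hbase _).symm
      _ ≤ _ := intervalIntegral.integral_mono_on ht0.le (hint_r _) hint hlow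
  · calc (∫ x in (0:ℝ)..t, 1 / Real.pi * x ^ (-(1:ℝ)/2) * (1 - x) ^ (-(1:ℝ)/2))
        ≤ ∫ x in (0:ℝ)..t, C * x ^ (-(1:ℝ)/2) :=
          intervalIntegral.integral_mono_on ht0.le hint (hint_r C) hhigh
      _ = C * (2 * Real.sqrt t) := hbase C
      _ = 2 / Real.pi * Real.exp (-ℓ / 2) := by
          have hs : Real.sqrt (1 - t) ≠ 0 := by positivity
          rw [hC, hrt, show Real.exp (-ℓ/2) = Real.sqrt t / Real.sqrt (1-t) by
            rw [← Real.sqrt_div ht0.le,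
              show t / (1-t) = Real.exp (-ℓ) by
                rw [Real.exp_neg, ht, hE]; field_simp; ring,
              show (-ℓ/2 : ℝ) = (-ℓ)/2 by ring, Real.exp_half]]
          field_simp
end
end

section
/- Let z be a real random variable supported on (0,1) with probability density (1/π)·x^{−1/2}·(1−x)^{−1/2} (the Beta(1/2,1/2) distribution). Then for every ℓ ≥ 0, the conditional expectation satisfies E[ log((1−z)/z) | log((1−z)/z) ≥ ℓ ] ≤ ℓ + 2·√(1 + e^{−ℓ}); equivalently, ∫_0^{1/(1+e^{ℓ})} log((1−x)/x)·(1/π)x^{−1/2}(1−x)^{−1/2} dx ≤ (ℓ + 2√(1+e^{−ℓ}))·∫_0^{1/(1+e^{ℓ})} (1/π)x^{−1/2}(1−x)^{−1/2} dx. -/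
open MeasureTheory Matrix

noncomputable section

section AuxLemmas
open Set


lemma aux_intble_rpow_log {r b : ℝ} (hr : -1 < r) (hb : 0 < b) (hb1 : b ≤ 1) :
    IntervalIntegrable (fun x => x ^ r * Real.log x) volume 0 b := by
  rw [intervalIntegrable_iff_integrableOn_Ioc_of_le hb.le]
  have hr2 : (-1 : ℝ) < (r - 1) / 2 := by linarith
  have hr1 : (0:ℝ) < r + 1 := by linarith
  have hg : IntegrableOn (fun x : ℝ => (2 / (r + 1)) * x ^ ((r - 1) / 2)) (Ioc 0 b) volume := by
    have := (intervalIntegral.intervalIntegrable_rpow' (a := 0) (b := b) hr2)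
    rw [intervalIntegrable_iff_integrableOn_Ioc_of_le hb.le] at this
    exact this.const_mul _
  apply Integrable.mono' hg
  · apply ContinuousOn.aestronglyMeasurable _ measurableSet_Ioc
    apply ContinuousOn.mul
    · exact fun x hx => (Real.continuousAt_rpow_const x r (Or.inl hx.1.ne')).continuousWithinAt
    · exact fun x hx => (Real.continuousAt_log hx.1.ne').continuousWithinAt
  · filter_upwards [ae_restrict_mem measurableSet_Ioc] with x hx
    have hx0 : 0 < x := hx.1
    have hx1 : x ≤ 1 := le_trans hx.2 hb1
    have hrp : 0 < (r + 1) / 2 := by linarith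
    have hlog : |Real.log x| ≤ (2 / (r + 1)) * x ^ (-((r+1)/2)) := by
      rw [abs_of_nonpos (Real.log_nonpos hx0.le hx1)]
      have h1 : Real.log (x ^ (-((r+1)/2))) ≤ x ^ (-((r+1)/2)) - 1 :=
        Real.log_le_sub_one_of_pos (Real.rpow_pos_of_pos hx0 _)
      rw [Real.log_rpow hx0] at h1
      have h2 : -Real.log x ≤ x ^ (-((r+1)/2)) / ((r+1)/2) := by
        rw [le_div_iff₀ hrp]; nlinarith [h1]
      have h3 : x ^ (-((r+1)/2)) / ((r+1)/2) = (2 / (r + 1)) * x ^ (-((r+1)/2)) := by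
        field_simp
      linarith [h2, h3.le, h3.ge]
    have hxr : (0:ℝ) < x ^ r := Real.rpow_pos_of_pos hx0 _
    rw [norm_mul, Real.norm_eq_abs, Real.norm_eq_abs, abs_of_pos hxr]
    calc x ^ r * |Real.log x| ≤ x ^ r * ((2 / (r + 1)) * x ^ (-((r+1)/2))) :=
          mul_le_mul_of_nonneg_left hlog hxr.le
      _ = x ^ (r + -((r+1)/2)) * (2 / (r + 1)) := by rw [Real.rpow_add hx0]; ring
      _ = (2 / (r + 1)) * x ^ ((r - 1) / 2) := by
          rw [show r + -((r+1)/2) = (r-1)/2 by ring]; ring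

lemma aux_integral_rpow_log {r b : ℝ} (hr : -1 < r) (hb : 0 < b) (hb1 : b ≤ 1) :
    ∫ x in (0:ℝ)..b, x ^ r * Real.log x
      = (Real.log b * b ^ (r+1) - b ^ (r+1) / (r+1)) / (r+1) := by
  have hr1 : (0:ℝ) < r + 1 := by linarith
  set F : ℝ → ℝ := fun x => (Real.log x * x ^ (r+1) - x ^ (r+1) / (r+1)) / (r+1) with hF
  have hF0 : F 0 = 0 := by
    simp [hF, Real.zero_rpow hr1.ne']
  have hcont : ContinuousOn F (Icc 0 b) := by
    intro x hx
    rcases eq_or_lt_of_le hx.1 with h0 | h0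
    · subst h0
      rw [ContinuousWithinAt, hF0]
      have hmono : nhdsWithin (0:ℝ) (Icc 0 b) ≤ nhdsWithin 0 (insert 0 (Ioi 0)) := by
        apply nhdsWithin_mono
        intro y hy
        rcases eq_or_lt_of_le hy.1 with h | h
        · exact Or.inl h.symm
        · exact Or.inr h
      apply Filter.Tendsto.mono_left _ hmono
      rw [nhdsWithin_insert]
      rw [Filter.tendsto_sup]
      constructor
      · simpa [hF0] using (tendsto_pure_nhds F 0)
      · have h1 := tendsto_log_mul_rpow_nhdsGT_zero hr1
        have h2 : Filter.Tendsto (fun x : ℝ => x ^ (r+1)) (nhdsWithin 0 (Ioi 0)) (nhds 0) := by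
          have := (Real.continuousAt_rpow_const 0 (r+1) (Or.inr hr1.le)).continuousWithinAt
            (s := Ioi (0:ℝ))
          rw [ContinuousWithinAt, Real.zero_rpow hr1.ne'] at this
          exact this
        have := (h1.sub (h2.div_const (r+1))).div_const (r+1)
        simpa using this
    · have hx0 : x ≠ 0 := h0.ne'
      apply ContinuousWithinAt.div_const
      apply ContinuousWithinAt.sub
      · exact ((Real.continuousAt_log hx0).mul
          (Real.continuousAt_rpow_const x (r+1) (Or.inl hx0))).continuousWithinAt
      · exact ((Real.continuousAt_rpow_const x (r+1) (Or.inl hx0)).div_const _).continuousWithinAt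
  have hderiv : ∀ x ∈ Ioo 0 b, HasDerivWithinAt F (x ^ r * Real.log x) (Ioi x) x := by
    intro x hx
    have hx0 : 0 < x := hx.1
    have h1 : HasDerivAt (fun y : ℝ => Real.log y * y ^ (r+1))
        (x⁻¹ * x ^ (r+1) + Real.log x * ((r+1) * x ^ (r+1-1))) x :=
      (Real.hasDerivAt_log hx0.ne').mul (Real.hasDerivAt_rpow_const (Or.inl hx0.ne'))
    have h2 : HasDerivAt (fun y : ℝ => y ^ (r+1) / (r+1)) ((r+1) * x ^ (r+1-1) / (r+1)) x :=
      (Real.hasDerivAt_rpow_const (Or.inl hx0.ne')).div_const _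
    have h3 := ((h1.sub h2).div_const (r+1)).hasDerivWithinAt (s := Ioi x)
    refine HasDerivWithinAt.congr_deriv h3 ?_
    have e1 : x ^ (r+1-1) = x ^ r := by norm_num
    have e2 : x⁻¹ * x ^ (r+1) = x ^ r := by
      rw [show r + 1 = 1 + r by ring, Real.rpow_add hx0, Real.rpow_one]
      field_simp
    rw [e1, e2]
    field_simp
    ring
  rw [intervalIntegral.integral_eq_sub_of_hasDeriv_right_of_le hb.le hcont hderiv
    (aux_intble_rpow_log hr hb hb1), hF0, hF]
  ring

lemma aux_scalar (s u : ℝ) (hs : 0 < s) (hu : 0 < u) (h1 : u^2 = 1 - s^2)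
    (h2 : s^2 ≤ 1/2) :
    4*s + (4/9)*s^3 + (u^2)⁻¹ * ((4/3)*s^3 + (4/15)*s^5)
      ≤ 2*u⁻¹*(2*s + s^3/3 + (3/20)*s^5) := by
  have hs2 : (0:ℝ) ≤ s^2 := sq_nonneg s
  have hp0 : (0:ℝ) < 1 - s^2/2 - s^4/4 := by nlinarith [sq_nonneg s, mul_nonneg hs2 hs2]
  have hsq : (1 - s^2/2 - s^4/4)^2 ≤ u^2 := by
    rw [h1]; nlinarith [mul_nonneg hs2 hs2, mul_nonneg (mul_nonneg hs2 hs2) hs2, mul_nonneg (mul_nonneg (mul_nonneg hs2 hs2) hs2) hs2]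
  have hq : 1 - s^2/2 - s^4/4 ≤ u := by nlinarith [hsq, mul_pos hu hp0]
  have h5 : s^5 ≤ s^3/2 := by nlinarith [pow_pos hs 3]
  have h7 : s^7 ≤ s^3/4 := by nlinarith [pow_pos hs 3, sq_nonneg (s^2 - 1/2)]
  have h9 : s^9 ≤ s^3/8 := by nlinarith [pow_pos hs 3, sq_nonneg (s^2 - 1/2), sq_nonneg (s^3 - s)]
  have hkey : (8/9)*s^3 - (77/90)*s^5 - (19/60)*s^7 - (3/40)*s^9 ≥ 0 := by
    nlinarith [pow_pos hs 3]
  have hP : (0:ℝ) < 2*s + s^3/3 + (3/20)*s^5 := by positivity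
  have hp : u^2*(4*s + (4/9)*s^3) + ((4/3)*s^3 + (4/15)*s^5)
      ≤ u*(2*(2*s + s^3/3 + (3/20)*s^5)) := by
    have hstep : (1 - s^2/2 - s^4/4)*(2*(2*s + s^3/3 + (3/20)*s^5))
        ≥ (1-s^2)*(4*s+(4/9)*s^3) + ((4/3)*s^3+(4/15)*s^5) := by nlinarith [hkey]
    have hmono : (1 - s^2/2 - s^4/4)*(2*(2*s + s^3/3 + (3/20)*s^5))
        ≤ u*(2*(2*s + s^3/3 + (3/20)*s^5)) :=
      mul_le_mul_of_nonneg_right hq (by positivity)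
    rw [h1]; linarith
  have hu2 : (0:ℝ) < u^2 := by positivity
  have e1 : 4*s + (4/9)*s^3 + (u^2)⁻¹ * ((4/3)*s^3 + (4/15)*s^5)
      = (u^2)⁻¹ * (u^2*(4*s + (4/9)*s^3) + ((4/3)*s^3 + (4/15)*s^5)) := by
    field_simp
  have e2 : 2*u⁻¹*(2*s + s^3/3 + (3/20)*s^5)
      = (u^2)⁻¹ * (u*(2*(2*s + s^3/3 + (3/20)*s^5))) := by
    field_simp
  rw [e1, e2]
  exact mul_le_mul_of_nonneg_left hp (by positivity)


end AuxLemmas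

open Set

set_option maxHeartbeats 2000000 in
/-- Conditional expectation bound for the logit of a
`Beta(1/2,1/2)` random variable, in its equivalent integral form. -/
theorem stmt16 (ℓ : ℝ) (hℓ : 0 ≤ ℓ) :
    (∫ x in (0 : ℝ)..(1 / (1 + Real.exp ℓ)),
        Real.log ((1 - x) / x) * (1 / Real.pi * x ^ (-(1 : ℝ) / 2) * (1 - x) ^ (-(1 : ℝ) / 2))) ≤
      (ℓ + 2 * Real.sqrt (1 + Real.exp (-ℓ))) *
        ∫ x in (0 : ℝ)..(1 / (1 + Real.exp ℓ)),
          1 / Real.pi * x ^ (-(1 : ℝ) / 2) * (1 - x) ^ (-(1 : ℝ) / 2) := by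
  have hπ : (0:ℝ) < Real.pi := Real.pi_pos
  have hE : 1 ≤ Real.exp ℓ := Real.one_le_exp hℓ
  have hE0 : (0:ℝ) < 1 + Real.exp ℓ := by linarith
  set b : ℝ := 1 / (1 + Real.exp ℓ) with hbdef
  have hb0 : 0 < b := by positivity
  have hbhalf : b ≤ 1/2 := by
    rw [hbdef, div_le_div_iff₀ hE0 (by norm_num)]; linarith
  have hb1 : b < 1 := by linarith
  have h1b : (0:ℝ) < 1 - b := by linarith
  have hexp : Real.exp ℓ = (1 - b) / b := by
    rw [hbdef]; field_simp; ring
  have hl : ℓ = Real.log (1 - b) - Real.log b := by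
    rw [← Real.log_exp ℓ, hexp, Real.log_div h1b.ne' hb0.ne']
  have hc : 1 + Real.exp (-ℓ) = (1 - b)⁻¹ := by
    rw [Real.exp_neg, hexp]; field_simp; ring
  -- abbreviations
  set u : ℝ := Real.sqrt (1 - b) with hudef
  have hu0 : 0 < u := Real.sqrt_pos.mpr h1b
  have hu2 : u^2 = 1 - b := Real.sq_sqrt h1b.le
  set s : ℝ := b ^ ((1:ℝ)/2) with hsdef
  have hs0 : 0 < s := Real.rpow_pos_of_pos hb0 _
  have hs2 : s^2 = b := by
    rw [hsdef, ← Real.rpow_natCast (b ^ ((1:ℝ)/2)) 2, ← Real.rpow_mul hb0.le]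
    norm_num
  have hs3 : b ^ ((3:ℝ)/2) = s^3 := by
    rw [hsdef, ← Real.rpow_natCast (b ^ ((1:ℝ)/2)) 3, ← Real.rpow_mul hb0.le]
    norm_num
  have hs5 : b ^ ((5:ℝ)/2) = s^5 := by
    rw [hsdef, ← Real.rpow_natCast (b ^ ((1:ℝ)/2)) 5, ← Real.rpow_mul hb0.le]
    norm_num
  have hshalf : s^2 ≤ 1/2 := by rw [hs2]; exact hbhalf
  have hu2s : u^2 = 1 - s^2 := by rw [hu2, hs2]
  set d : ℝ := (1 - b)⁻¹ with hddef
  have hd0 : 0 < d := by positivity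
  have hsqrt : Real.sqrt (1 + Real.exp (-ℓ)) = u⁻¹ := by
    rw [hc, Real.sqrt_inv, hudef]
  -- the three functions
  set W : ℝ → ℝ := fun x => 1 / Real.pi * x ^ (-(1 : ℝ) / 2) * (1 - x) ^ (-(1 : ℝ) / 2)
    with hWdef
  set G : ℝ → ℝ := fun x => 1/Real.pi *
      ((Real.log b + d*b) * x ^ (-(1:ℝ)/2) + (Real.log b + d*b - d) * x ^ ((1:ℝ)/2)
        - d * x ^ ((3:ℝ)/2) - x ^ (-(1:ℝ)/2) * Real.log x - x ^ ((1:ℝ)/2) * Real.log x)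
    with hGdef
  set H : ℝ → ℝ := fun x => 1/Real.pi *
      (x ^ (-(1:ℝ)/2) + x ^ ((1:ℝ)/2)/2 + 3/8 * x ^ ((3:ℝ)/2)) with hHdef
  -- rpow identities
  have hAx : ∀ x : ℝ, 0 < x → x ^ (-(1:ℝ)/2) * x = x ^ ((1:ℝ)/2) := by
    intro x hx
    have h := (Real.rpow_add hx (-(1:ℝ)/2) 1).symm
    rw [Real.rpow_one] at h
    rw [h, show (-(1:ℝ)/2 + 1) = (1:ℝ)/2 by norm_num]
  have hBx : ∀ x : ℝ, 0 < x → x ^ ((1:ℝ)/2) * x = x ^ ((3:ℝ)/2) := by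
    intro x hx
    have h := (Real.rpow_add hx ((1:ℝ)/2) 1).symm
    rw [Real.rpow_one] at h
    rw [h, show ((1:ℝ)/2 + 1) = (3:ℝ)/2 by norm_num]
  have hCinv : ∀ x : ℝ, 0 < 1 - x → (1-x) ^ (-(1:ℝ)/2) = (Real.sqrt (1-x))⁻¹ := by
    intro x hx
    rw [show (-(1:ℝ)/2) = -((1:ℝ)/2) by norm_num, Real.rpow_neg (by linarith),
      ← Real.sqrt_eq_rpow]
  -- pointwise upper bound for (1-x)^(-1/2)
  have hCub : ∀ x ∈ Ioc (0:ℝ) b, (1-x) ^ (-(1:ℝ)/2) ≤ 1 + x := by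
    intro x hx
    have hx0 := hx.1
    have hxb := hx.2
    have h1x : (0:ℝ) < 1 - x := by linarith
    have hsp : 0 < Real.sqrt (1-x) := Real.sqrt_pos.mpr h1x
    have hsq := Real.sq_sqrt h1x.le
    rw [hCinv x h1x, ← one_div, div_le_iff₀ hsp]
    have hx12 : x ≤ 1/2 := by linarith
    have hz2 : 1 ≤ ((1+x) * Real.sqrt (1-x))^2 := by
      rw [mul_pow, hsq]
      nlinarith [mul_nonneg hx0.le (by linarith : (0:ℝ) ≤ 1/2 - x),
        mul_nonneg (mul_nonneg hx0.le hx0.le) (by linarith : (0:ℝ) ≤ 1/2 - x),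
        mul_nonneg (mul_nonneg hx0.le hx0.le) (by linarith : (0:ℝ) ≤ 1 - x)]
    nlinarith [hz2, mul_pos (show (0:ℝ) < 1 + x by linarith) hsp]
  -- pointwise lower bound for (1-x)^(-1/2)
  have hClb : ∀ x ∈ Ioc (0:ℝ) b, 1 + x/2 + 3/8*x^2 ≤ (1-x) ^ (-(1:ℝ)/2) := by
    intro x hx
    have hx0 := hx.1
    have hxb := hx.2
    have h1x : (0:ℝ) < 1 - x := by linarith
    have hsp : 0 < Real.sqrt (1-x) := Real.sqrt_pos.mpr h1x
    have hsq := Real.sq_sqrt h1x.le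
    have hpp : (0:ℝ) < 1 + x/2 + 3/8*x^2 := by positivity
    rw [hCinv x h1x, ← one_div, le_div_iff₀ hsp]
    have hsqle : ((1 + x/2 + 3/8*x^2) * Real.sqrt (1-x))^2 ≤ 1 := by
      rw [mul_pow, hsq]
      nlinarith [pow_nonneg hx0.le 3, pow_nonneg hx0.le 4, pow_nonneg hx0.le 5]
    nlinarith [hsqle, mul_pos hpp hsp]
  -- nonnegativity of W on the interval
  have hW0 : ∀ x ∈ Ioc (0:ℝ) b, 0 ≤ W x := by
    intro x hx
    have hx0 := hx.1
    have h1x : (0:ℝ) < 1 - x := by linarith [hx.2]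
    rw [hWdef]
    have := Real.rpow_nonneg hx0.le (-(1:ℝ)/2)
    have := Real.rpow_nonneg h1x.le (-(1:ℝ)/2)
    positivity
  -- W is bounded by (1/π)(x^(-1/2) + x^(1/2))
  have hWub : ∀ x ∈ Ioc (0:ℝ) b, W x ≤ 1/Real.pi * (x ^ (-(1:ℝ)/2) + x ^ ((1:ℝ)/2)) := by
    intro x hx
    have hx0 := hx.1
    have hA0 : (0:ℝ) ≤ x ^ (-(1:ℝ)/2) := Real.rpow_nonneg hx0.le _
    have := hCub x hx
    have hAx' := hAx x hx0
    calc W x = (1/Real.pi * x ^ (-(1:ℝ)/2)) * (1-x) ^ (-(1:ℝ)/2) := by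
          simp only [hWdef]
      _ ≤ (1/Real.pi * x ^ (-(1:ℝ)/2)) * (1 + x) :=
          mul_le_mul_of_nonneg_left this (by positivity)
      _ = 1/Real.pi * (x ^ (-(1:ℝ)/2) + x ^ ((1:ℝ)/2)) := by
          rw [← hAx']; ring
  -- main pointwise inequality
  have hFG : ∀ x ∈ Ioc (0:ℝ) b,
      Real.log ((1-x)/x) * W x ≤ ℓ * W x + G x := by
    intro x hx
    have hx0 := hx.1
    have hxb := hx.2
    have h1x : (0:ℝ) < 1 - x := by linarith
    have hflog : Real.log ((1-x)/x) = Real.log (1-x) - Real.log x :=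
      Real.log_div h1x.ne' hx0.ne'
    have hm1 : Real.log (1-x) - Real.log (1-b) ≤ (b - x)/(1-b) := by
      have h := Real.log_le_sub_one_of_pos (show (0:ℝ) < (1-x)/(1-b) by positivity)
      rw [Real.log_div h1x.ne' h1b.ne'] at h
      have e : (1-x)/(1-b) - 1 = (b-x)/(1-b) := by field_simp; ring
      linarith [e.le, e.ge]
    have hm2 : Real.log x ≤ Real.log b := Real.log_le_log hx0 hxb
    have hfm : Real.log ((1-x)/x) ≤ ℓ + ((Real.log b - Real.log x) + (b-x)/(1-b)) := by
      rw [hflog, hl]; linarith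
    have hf0 : 0 ≤ Real.log ((1-x)/x) := by
      apply Real.log_nonneg
      rw [le_div_iff₀ hx0]; linarith
    have hW0x : 0 ≤ W x := hW0 x hx
    have hm0 : 0 ≤ (Real.log b - Real.log x) + (b-x)/(1-b) := by
      have : (0:ℝ) ≤ (b-x)/(1-b) := div_nonneg (by linarith) h1b.le
      linarith
    have step1 : Real.log ((1-x)/x) * W x
        ≤ (ℓ + ((Real.log b - Real.log x) + (b-x)/(1-b))) * W x :=
      mul_le_mul_of_nonneg_right hfm hW0x
    have step2 : ((Real.log b - Real.log x) + (b-x)/(1-b)) * W x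
        ≤ ((Real.log b - Real.log x) + (b-x)/(1-b))
            * (1/Real.pi * (x ^ (-(1:ℝ)/2) + x ^ ((1:ℝ)/2))) :=
      mul_le_mul_of_nonneg_left (hWub x hx) hm0
    have step3 : ((Real.log b - Real.log x) + (b-x)/(1-b))
        * (1/Real.pi * (x ^ (-(1:ℝ)/2) + x ^ ((1:ℝ)/2))) = G x := by
      have e1 := hAx x hx0
      have e2 := hBx x hx0
      simp only [hGdef]
      rw [← e2, ← e1, hddef]
      field_simp
      ring
    nlinarith [step1, step2, step3.le, step3.ge]
  -- H below W
  have hHW : ∀ x ∈ Ioc (0:ℝ) b, H x ≤ W x := by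
    intro x hx
    have hx0 := hx.1
    have e1 := hAx x hx0
    have e2 := hBx x hx0
    have hA0 : (0:ℝ) ≤ x ^ (-(1:ℝ)/2) := Real.rpow_nonneg hx0.le _
    have hHx : H x = (1/Real.pi * x ^ (-(1:ℝ)/2)) * (1 + x/2 + 3/8*x^2) := by
      simp only [hHdef]
      rw [← e2, ← e1]
      field_simp
    have : (1/Real.pi * x ^ (-(1:ℝ)/2)) * (1 + x/2 + 3/8*x^2)
        ≤ (1/Real.pi * x ^ (-(1:ℝ)/2)) * ((1-x) ^ (-(1:ℝ)/2)) :=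
      mul_le_mul_of_nonneg_left (hClb x hx) (by positivity)
    calc H x = (1/Real.pi * x ^ (-(1:ℝ)/2)) * (1 + x/2 + 3/8*x^2) := hHx
      _ ≤ (1/Real.pi * x ^ (-(1:ℝ)/2)) * ((1-x) ^ (-(1:ℝ)/2)) := this
      _ = W x := by simp only [hWdef]
  have hH0 : ∀ x ∈ Ioc (0:ℝ) b, 0 ≤ H x := by
    intro x hx
    have hx0 := hx.1
    have h1 : (0:ℝ) ≤ x ^ (-(1:ℝ)/2) := Real.rpow_nonneg hx0.le _
    have h2 : (0:ℝ) ≤ x ^ ((1:ℝ)/2) := Real.rpow_nonneg hx0.le _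
    have h3 : (0:ℝ) ≤ x ^ ((3:ℝ)/2) := Real.rpow_nonneg hx0.le _
    simp only [hHdef]
    positivity
  -- nonnegativity of the main integrand
  have hF0 : ∀ x ∈ Ioc (0:ℝ) b, 0 ≤ Real.log ((1-x)/x) * W x := by
    intro x hx
    have hx0 := hx.1
    have hxb := hx.2
    apply mul_nonneg _ (hW0 x hx)
    apply Real.log_nonneg
    rw [le_div_iff₀ hx0]; linarith
  -- interval integrabilities
  have hiA : IntervalIntegrable (fun x : ℝ => x ^ (-(1:ℝ)/2)) volume 0 b :=
    intervalIntegral.intervalIntegrable_rpow' (by norm_num)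
  have hiB : IntervalIntegrable (fun x : ℝ => x ^ ((1:ℝ)/2)) volume 0 b :=
    intervalIntegral.intervalIntegrable_rpow' (by norm_num)
  have hiT : IntervalIntegrable (fun x : ℝ => x ^ ((3:ℝ)/2)) volume 0 b :=
    intervalIntegral.intervalIntegrable_rpow' (by norm_num)
  have hiAL : IntervalIntegrable (fun x : ℝ => x ^ (-(1:ℝ)/2) * Real.log x) volume 0 b :=
    aux_intble_rpow_log (by norm_num) hb0 hb1.le
  have hiBL : IntervalIntegrable (fun x : ℝ => x ^ ((1:ℝ)/2) * Real.log x) volume 0 b :=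
    aux_intble_rpow_log (by norm_num) hb0 hb1.le
  have hiG : IntervalIntegrable G volume 0 b := by
    rw [hGdef]
    exact ((((((hiA.const_mul (Real.log b + d*b)).add
      (hiB.const_mul (Real.log b + d*b - d))).sub (hiT.const_mul d)).sub hiAL).sub
        hiBL).const_mul (1/Real.pi))
  have hiH : IntervalIntegrable H volume 0 b := by
    rw [hHdef]
    exact (((hiA.add (hiB.div_const 2)).add (hiT.const_mul (3/8))).const_mul (1/Real.pi))
  -- W integrable on Ioc
  have hWInt : IntegrableOn W (Ioc 0 b) volume := by
    have hdom : IntegrableOn (fun x : ℝ => 1/Real.pi * (x ^ (-(1:ℝ)/2) + x ^ ((1:ℝ)/2)))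
        (Ioc 0 b) volume :=
      (intervalIntegrable_iff_integrableOn_Ioc_of_le hb0.le).mp
        ((hiA.add hiB).const_mul (1/Real.pi))
    apply Integrable.mono' hdom
    · apply ContinuousOn.aestronglyMeasurable _ measurableSet_Ioc
      rw [hWdef]
      intro x hx
      have hx0 : x ≠ 0 := ne_of_gt hx.1
      have h1x : (1:ℝ) - x ≠ 0 := by
        have : x < 1 := lt_of_le_of_lt hx.2 hb1
        intro h; linarith [sub_eq_zero.mp h]
      exact ((continuousAt_const.mul (Real.continuousAt_rpow_const x _ (Or.inl hx0))).mul
        (((continuous_const.sub continuous_id).continuousAt).rpow_const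
          (Or.inl h1x))).continuousWithinAt
    · filter_upwards [ae_restrict_mem measurableSet_Ioc] with x hx
      rw [Real.norm_eq_abs, abs_of_nonneg (hW0 x hx)]
      exact hWub x hx
  have hGInt : IntegrableOn G (Ioc 0 b) volume :=
    (intervalIntegrable_iff_integrableOn_Ioc_of_le hb0.le).mp hiG
  have hHInt : IntegrableOn H (Ioc 0 b) volume :=
    (intervalIntegrable_iff_integrableOn_Ioc_of_le hb0.le).mp hiH
  -- basic integral values
  have hIA : ∫ x in (0:ℝ)..b, x ^ (-(1:ℝ)/2) = 2*s := by
    rw [integral_rpow (Or.inl (by norm_num)),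
      show (-(1:ℝ)/2 + 1) = (1:ℝ)/2 by norm_num,
      Real.zero_rpow (by norm_num : ((1:ℝ)/2) ≠ 0), hsdef]
    ring
  have hIB : ∫ x in (0:ℝ)..b, x ^ ((1:ℝ)/2) = (2/3)*s^3 := by
    rw [integral_rpow (Or.inl (by norm_num)),
      show ((1:ℝ)/2 + 1) = (3:ℝ)/2 by norm_num,
      Real.zero_rpow (by norm_num : ((3:ℝ)/2) ≠ 0), hs3]
    ring
  have hIT : ∫ x in (0:ℝ)..b, x ^ ((3:ℝ)/2) = (2/5)*s^5 := by
    rw [integral_rpow (Or.inl (by norm_num)),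
      show ((3:ℝ)/2 + 1) = (5:ℝ)/2 by norm_num,
      Real.zero_rpow (by norm_num : ((5:ℝ)/2) ≠ 0), hs5]
    ring
  have hIAL : ∫ x in (0:ℝ)..b, x ^ (-(1:ℝ)/2) * Real.log x = 2*s*Real.log b - 4*s := by
    rw [aux_integral_rpow_log (by norm_num) hb0 hb1.le,
      show (-(1:ℝ)/2 + 1) = (1:ℝ)/2 by norm_num, ← hsdef]
    ring
  have hIBL : ∫ x in (0:ℝ)..b, x ^ ((1:ℝ)/2) * Real.log x
      = (2/3)*s^3*Real.log b - (4/9)*s^3 := by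
    rw [aux_integral_rpow_log (by norm_num) hb0 hb1.le,
      show ((1:ℝ)/2 + 1) = (3:ℝ)/2 by norm_num, hs3]
    ring
  -- value of ∫ G
  have hGval : ∫ x in (0:ℝ)..b, G x = 1/Real.pi *
      ((Real.log b + d*b)*(2*s) + (Real.log b + d*b - d)*((2/3)*s^3) - d*((2/5)*s^5)
        - (2*s*Real.log b - 4*s) - ((2/3)*s^3*Real.log b - (4/9)*s^3)) := by
    rw [hGdef]
    rw [intervalIntegral.integral_const_mul]
    congr 1
    rw [intervalIntegral.integral_sub (((((hiA.const_mul (Real.log b + d*b)).add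
        (hiB.const_mul (Real.log b + d*b - d))).sub (hiT.const_mul d)).sub hiAL)) hiBL,
      intervalIntegral.integral_sub ((((hiA.const_mul (Real.log b + d*b)).add
        (hiB.const_mul (Real.log b + d*b - d))).sub (hiT.const_mul d))) hiAL,
      intervalIntegral.integral_sub ((hiA.const_mul (Real.log b + d*b)).add
        (hiB.const_mul (Real.log b + d*b - d))) (hiT.const_mul d),
      intervalIntegral.integral_add (hiA.const_mul (Real.log b + d*b))
        (hiB.const_mul (Real.log b + d*b - d)),
      intervalIntegral.integral_const_mul, intervalIntegral.integral_const_mul,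
      intervalIntegral.integral_const_mul, hIA, hIB, hIT, hIAL, hIBL]
  -- value of ∫ H
  have hHval : ∫ x in (0:ℝ)..b, H x
      = 1/Real.pi * (2*s + ((2/3)*s^3)/2 + 3/8*((2/5)*s^5)) := by
    rw [hHdef]
    rw [intervalIntegral.integral_const_mul]
    congr 1
    rw [intervalIntegral.integral_add (hiA.add (hiB.div_const 2)) (hiT.const_mul (3/8)),
      intervalIntegral.integral_add hiA (hiB.div_const 2),
      intervalIntegral.integral_div, intervalIntegral.integral_const_mul, hIA, hIB, hIT]
  -- the key comparison between ∫G and ∫H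
  have hGle : ∫ x in (0:ℝ)..b, G x ≤ 2*u⁻¹ * ∫ x in (0:ℝ)..b, H x := by
    rw [hGval, hHval]
    have hds : d = (u^2)⁻¹ := by rw [hddef, hu2]
    have hinner : (Real.log b + d*b)*(2*s) + (Real.log b + d*b - d)*((2/3)*s^3)
        - d*((2/5)*s^5) - (2*s*Real.log b - 4*s) - ((2/3)*s^3*Real.log b - (4/9)*s^3)
        ≤ 2*u⁻¹*(2*s + ((2/3)*s^3)/2 + 3/8*((2/5)*s^5)) := by
      have hlhs : (Real.log b + d*b)*(2*s) + (Real.log b + d*b - d)*((2/3)*s^3)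
          - d*((2/5)*s^5) - (2*s*Real.log b - 4*s) - ((2/3)*s^3*Real.log b - (4/9)*s^3)
          = 4*s + (4/9)*s^3 + (u^2)⁻¹ * ((4/3)*s^3 + (4/15)*s^5) := by
        rw [hds] at *
        linear_combination (-(2*(u^2)⁻¹*s) - (2/3)*(u^2)⁻¹*s^3) * hs2
      have hrhs : 2*u⁻¹*(2*s + ((2/3)*s^3)/2 + 3/8*((2/5)*s^5))
          = 2*u⁻¹*(2*s + s^3/3 + (3/20)*s^5) := by ring
      rw [hlhs, hrhs]
      exact aux_scalar s u hs0 hu0 hu2s hshalf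
    have h2 : 2*u⁻¹ * (1/Real.pi * (2*s + ((2/3)*s^3)/2 + 3/8*((2/5)*s^5)))
        = 1/Real.pi * (2*u⁻¹*(2*s + ((2/3)*s^3)/2 + 3/8*((2/5)*s^5))) := by ring
    rw [h2]
    exact mul_le_mul_of_nonneg_left hinner (by positivity)
  -- final assembly
  rw [intervalIntegral.integral_of_le hb0.le, intervalIntegral.integral_of_le hb0.le]
  show (∫ x in Ioc (0:ℝ) b, Real.log ((1-x)/x) * W x)
      ≤ (ℓ + 2*Real.sqrt (1+Real.exp (-ℓ))) * ∫ x in Ioc (0:ℝ) b, W x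
  have hIW0 : 0 ≤ ∫ x in Ioc (0:ℝ) b, W x := setIntegral_nonneg measurableSet_Ioc hW0
  have step1 : (∫ x in Ioc (0:ℝ) b, Real.log ((1-x)/x) * W x)
      ≤ ∫ x in Ioc (0:ℝ) b, (ℓ * W x + G x) := by
    apply integral_mono_of_nonneg
    · filter_upwards [ae_restrict_mem measurableSet_Ioc] with x hx
      exact hF0 x hx
    · exact (hWInt.const_mul ℓ).add hGInt
    · filter_upwards [ae_restrict_mem measurableSet_Ioc] with x hx
      exact hFG x hx
  have step2 : ∫ x in Ioc (0:ℝ) b, (ℓ * W x + G x)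
      = ℓ * (∫ x in Ioc (0:ℝ) b, W x) + ∫ x in Ioc (0:ℝ) b, G x := by
    rw [integral_add (hWInt.const_mul ℓ) hGInt, integral_const_mul]
  have step3 : ∫ x in Ioc (0:ℝ) b, G x ≤ 2*u⁻¹ * ∫ x in Ioc (0:ℝ) b, H x := by
    rw [← intervalIntegral.integral_of_le hb0.le, ← intervalIntegral.integral_of_le hb0.le]
    exact hGle
  have step4 : ∫ x in Ioc (0:ℝ) b, H x ≤ ∫ x in Ioc (0:ℝ) b, W x := by
    apply integral_mono_of_nonneg
    · filter_upwards [ae_restrict_mem measurableSet_Ioc] with x hx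
      exact hH0 x hx
    · exact hWInt
    · filter_upwards [ae_restrict_mem measurableSet_Ioc] with x hx
      exact hHW x hx
  have h2u : (0:ℝ) ≤ 2*u⁻¹ := by positivity
  have c1 : 2*u⁻¹ * (∫ x in Ioc (0:ℝ) b, H x) ≤ 2*u⁻¹ * (∫ x in Ioc (0:ℝ) b, W x) :=
    mul_le_mul_of_nonneg_left step4 h2u
  rw [hsqrt]
  have expand : (ℓ + 2*u⁻¹) * (∫ x in Ioc (0:ℝ) b, W x)
      = ℓ * (∫ x in Ioc (0:ℝ) b, W x) + 2*u⁻¹*(∫ x in Ioc (0:ℝ) b, W x) := by ring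
  linarith [step1, step2.le, step2.ge, step3, c1, expand.le, expand.ge]
end
end
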